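/- arXiv:2008.02865 — 4 statements merged into one kernel-verified Lean document; each statement's English description precedes it below -/
import Mathlib

section
/- Let C be the 2n × 2n real symmetric circulant block matrix C = [[N, S],[S, N]], where N is an n × n symmetric Toeplitz matrix and S is the symmetric Toeplitz matrix completing C to a circulant. Let λ_0, …, λ_{2n−1} denote the eigenvalues of C indexed by the roots of unity z_j = exp(2πi j/(2n)). Then the smallest eigenvalue μ_min of N satisfies 2 μ_min ≥ (min over even j of λ_j) + (min over odd j of λ_j), and the largest eigenvalue μ_max of N satisfies 2 μ_max ≤ (max over even j of λ_j) + (max over odd j of λ_j). -/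
open Matrix Real

namespace Stmt9Aux
open Complex Finset

noncomputable def ee (n : ℕ) (t : ℤ) : ℂ := Complex.exp ((2 * Real.pi * t / (2*n) : ℝ) * Complex.I)

lemma ee_add (n : ℕ) (s t : ℤ) : ee n (s+t) = ee n s * ee n t := by
  rw [ee, ee, ee, ← Complex.exp_add]; congr 1; push_cast; ring

@[simp] lemma ee_zero (n : ℕ) : ee n 0 = 1 := by simp [ee]

lemma ee_natmul (n : ℕ) (j : ℕ) (t : ℤ) : ee n (j * t) = ee n t ^ j := by
  rw [ee, ee, ← Complex.exp_nat_mul]; congr 1; push_cast; ring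

lemma ee_mul_two_n (n : ℕ) (hn : 0 < n) (q : ℤ) : ee n (2*n*q) = 1 := by
  have hn' : (n:ℝ) ≠ 0 := Nat.cast_ne_zero.2 hn.ne'
  rw [ee]
  have h : (2 * Real.pi * ((2*(n:ℤ)*q : ℤ) : ℝ) / (2*n) : ℝ) = (q : ℝ) * (2 * Real.pi) := by
    push_cast; field_simp
  rw [h]
  have := Complex.exp_int_mul_two_pi_mul_I q
  rw [← this]; congr 1; push_cast; ring

lemma ee_congr (n : ℕ) (hn : 0 < n) {s t : ℤ} (h : (2*(n:ℤ)) ∣ (s - t)) : ee n s = ee n t := by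
  obtain ⟨q, hq⟩ := h
  have hs : s = t + 2*(n:ℤ)*q := by linarith
  rw [hs, ee_add, ee_mul_two_n n hn, mul_one]

lemma ee_n (n : ℕ) (hn : 0 < n) : ee n n = -1 := by
  have hn' : (n:ℝ) ≠ 0 := Nat.cast_ne_zero.2 hn.ne'
  rw [ee]
  have h : (2 * Real.pi * ((n:ℤ) : ℝ) / (2*n) : ℝ) = Real.pi := by push_cast; field_simp
  rw [h]
  exact Complex.exp_pi_mul_I

lemma ee_conj (n : ℕ) (t : ℤ) : (starRingEnd ℂ) (ee n t) = ee n (-t) := by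
  rw [ee, ee, ← Complex.exp_conj]
  congr 1
  rw [RingHom.map_mul, Complex.conj_I, Complex.conj_ofReal]
  push_cast; ring

lemma sum_ee (n : ℕ) (hn : 0 < n) (t : ℤ) :
    ∑ j : Fin n, ee n (2 * (j:ℤ) * t) = if (n:ℤ) ∣ t then (n:ℂ) else 0 := by
  have hn' : (n:ℝ) ≠ 0 := Nat.cast_ne_zero.2 hn.ne'
  have key : ∀ j : Fin n, ee n (2 * (j:ℤ) * t) = ee n (2*t) ^ (j:ℕ) := by
    intro j
    rw [← ee_natmul]
    congr 1
    ring
  simp_rw [key]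
  rw [Fin.sum_univ_eq_sum_range (fun i => ee n (2*t) ^ i)]
  split_ifs with h
  · obtain ⟨u, rfl⟩ := h
    have h1 : ee n (2*((n:ℤ)*u)) = 1 := by
      rw [show (2*((n:ℤ)*u)) = 2*(n:ℤ)*u by ring]
      exact ee_mul_two_n n hn u
    simp [h1]
  · have hz : ee n (2*t) ≠ 1 := by
      intro hc
      apply h
      rw [ee, Complex.exp_eq_one_iff] at hc
      obtain ⟨k, hk⟩ := hc
      have hk' : ((2 * Real.pi * ((2*t : ℤ):ℝ) / (2*n) : ℝ) : ℂ) * Complex.I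
          = (((k : ℝ) * (2 * Real.pi) : ℝ) : ℂ) * Complex.I := by
        rw [hk]; push_cast; ring
      have hre : (2 * Real.pi * ((2*t : ℤ):ℝ) / (2*n) : ℝ) = (k : ℝ) * (2 * Real.pi) := by
        exact_mod_cast mul_right_cancel₀ Complex.I_ne_zero hk'
      have hpi := Real.pi_ne_zero
      have ht : (t : ℝ) = (k:ℝ) * n := by
        field_simp at hre
        push_cast at hre; linarith
      refine ⟨k, ?_⟩
      have : (t:ℝ) = ((n:ℤ):ℝ) * (k:ℝ) := by push_cast; linarith
      exact_mod_cast this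
    rw [geom_sum_eq hz]
    have hpow : ee n (2*t) ^ n = 1 := by
      rw [← ee_natmul]
      rw [show ((n:ℤ) * (2*t)) = 2*(n:ℤ)*t by ring]
      exact ee_mul_two_n n hn t
    simp [hpow]

lemma sum_delta (n : ℕ) (hn : 0 < n) (g : ZMod (2*n) → ℂ) (a : ZMod (2*n)) :
    ∑ k : Fin (2*n), (if ((k:ℕ) : ZMod (2*n)) = a then g (((k:ℕ)) : ZMod (2*n)) else 0) = g a := by
  haveI : NeZero (2*n) := ⟨by omega⟩
  have hbij : Function.Bijective (fun k : Fin (2*n) => ((k:ℕ) : ZMod (2*n))) := by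
    rw [Fintype.bijective_iff_injective_and_card]
    constructor
    · intro a b hab
      have h2 := congrArg ZMod.val hab
      simp only [ZMod.val_cast_of_lt a.isLt, ZMod.val_cast_of_lt b.isLt] at h2
      exact Fin.ext h2
    · simp [ZMod.card]
  have hs := Fintype.sum_bijective _ hbij
    (fun k : Fin (2*n) => if ((k:ℕ) : ZMod (2*n)) = a then g (((k:ℕ)) : ZMod (2*n)) else 0)
    (fun x => if x = a then g x else 0) (fun k => rfl)
  rw [hs]
  simp

lemma dvd_iff (n : ℕ) (z : ℤ) :
    (n:ℤ) ∣ z ↔ ((z : ZMod (2*n)) = 0 ∨ (z : ZMod (2*n)) = ((n:ℕ) : ZMod (2*n))) := by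
  constructor
  · rintro ⟨s, rfl⟩
    rcases Int.even_or_odd s with ⟨u, rfl⟩ | ⟨u, rfl⟩
    · left
      rw [ZMod.intCast_zmod_eq_zero_iff_dvd]
      exact ⟨u, by push_cast; ring⟩
    · right
      rw [show ((n:ℕ) : ZMod (2*n)) = (((n:ℕ):ℤ) : ZMod (2*n)) by push_cast; ring,
        ZMod.intCast_eq_intCast_iff_dvd_sub]
      exact ⟨-u, by push_cast; ring⟩
  · rintro (h | h)
    · rw [ZMod.intCast_zmod_eq_zero_iff_dvd] at h
      obtain ⟨u, hu⟩ := h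
      exact ⟨2*u, by push_cast at hu ⊢; linarith⟩
    · rw [show ((n:ℕ) : ZMod (2*n)) = (((n:ℕ):ℤ) : ZMod (2*n)) by push_cast; ring,
        ZMod.intCast_eq_intCast_iff_dvd_sub] at h
      obtain ⟨u, hu⟩ := h
      exact ⟨1 - 2*u, by push_cast at hu ⊢; linarith⟩

lemma n_ne_zero (n : ℕ) (hn : 0 < n) : ((n:ℕ) : ZMod (2*n)) ≠ 0 := by
  rw [Ne, ZMod.natCast_eq_zero_iff]
  intro h
  have := Nat.le_of_dvd hn h
  omega

lemma two_n_zero (n : ℕ) : ((n:ℕ) : ZMod (2*n)) + ((n:ℕ) : ZMod (2*n)) = 0 := by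
  rw [← Nat.cast_add, show n + n = 2*n by omega]
  exact ZMod.natCast_self (2*n)

lemma ee_class0 (n : ℕ) (hn : 0 < n) {z : ℤ} (h : ((z : ZMod (2*n)) = 0)) : ee n z = 1 := by
  rw [ZMod.intCast_zmod_eq_zero_iff_dvd] at h
  obtain ⟨u, hu⟩ := h
  have : (2*(n:ℤ)) ∣ (z - 0) := ⟨u, by push_cast at hu ⊢; linarith⟩
  rw [ee_congr n hn this, ee_zero]

lemma ee_classn (n : ℕ) (hn : 0 < n) {z : ℤ}
    (h : (z : ZMod (2*n)) = ((n:ℕ) : ZMod (2*n))) : ee n z = -1 := by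
  rw [show ((n:ℕ) : ZMod (2*n)) = (((n:ℕ):ℤ) : ZMod (2*n)) by push_cast; ring,
    ZMod.intCast_eq_intCast_iff_dvd_sub] at h
  obtain ⟨u, hu⟩ := h
  have : (2*(n:ℤ)) ∣ (z - (n:ℤ)) := ⟨-u, by push_cast at hu ⊢; linarith⟩
  rw [ee_congr n hn this, ee_n n hn]

lemma class_iff (n : ℕ) (hn : 0 < n) (d : ℤ) (k : Fin (2*n)) :
    ((n:ℤ) ∣ ((k:ℤ) + d)) ↔
      (((k:ℕ) : ZMod (2*n)) = ((-d : ℤ) : ZMod (2*n)) ∨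
       ((k:ℕ) : ZMod (2*n)) = ((-d : ℤ) : ZMod (2*n)) + ((n:ℕ) : ZMod (2*n))) := by
  rw [dvd_iff n ((k:ℤ) + d)]
  have e1 : (((k:ℤ) + d : ℤ) : ZMod (2*n)) = ((k:ℕ) : ZMod (2*n)) + ((d:ℤ) : ZMod (2*n)) := by
    push_cast; ring
  have e2 : ((-d : ℤ) : ZMod (2*n)) = -((d:ℤ) : ZMod (2*n)) := by push_cast; ring
  rw [e1, e2]
  constructor
  · rintro (h | h)
    · left; linear_combination h
    · right; linear_combination h
  · rintro (h | h)
    · left; linear_combination h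
    · right; linear_combination h

lemma class_iff' (n : ℕ) (hn : 0 < n) (d : ℤ) (k : Fin (2*n)) :
    ((n:ℤ) ∣ (d - (k:ℤ))) ↔
      (((k:ℕ) : ZMod (2*n)) = ((d : ℤ) : ZMod (2*n)) ∨
       ((k:ℕ) : ZMod (2*n)) = ((d : ℤ) : ZMod (2*n)) + ((n:ℕ) : ZMod (2*n))) := by
  rw [dvd_iff n (d - (k:ℤ))]
  have e1 : ((d - (k:ℤ) : ℤ) : ZMod (2*n)) = ((d:ℤ) : ZMod (2*n)) - ((k:ℕ) : ZMod (2*n)) := by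
    push_cast; ring
  have h2n := two_n_zero n
  rw [e1]
  constructor
  · rintro (h | h)
    · left; linear_combination -h
    · right; linear_combination -h - h2n
  · rintro (h | h)
    · left; linear_combination -h
    · right; linear_combination -h - h2n

lemma class_zero (n : ℕ) (hn : 0 < n) (d : ℤ) (k : Fin (2*n))
    (h : ((k:ℕ) : ZMod (2*n)) = ((-d : ℤ) : ZMod (2*n))) :
    (((k:ℤ) + d : ℤ) : ZMod (2*n)) = 0 := by
  have e1 : (((k:ℤ) + d : ℤ) : ZMod (2*n)) = ((k:ℕ) : ZMod (2*n)) + ((d:ℤ) : ZMod (2*n)) := by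
    push_cast; ring
  have e2 : ((-d : ℤ) : ZMod (2*n)) = -((d:ℤ) : ZMod (2*n)) := by push_cast; ring
  rw [e1, h, e2]; ring

lemma class_n (n : ℕ) (hn : 0 < n) (d : ℤ) (k : Fin (2*n))
    (h : ((k:ℕ) : ZMod (2*n)) = ((-d : ℤ) : ZMod (2*n)) + ((n:ℕ) : ZMod (2*n))) :
    (((k:ℤ) + d : ℤ) : ZMod (2*n)) = ((n:ℕ) : ZMod (2*n)) := by
  have e1 : (((k:ℤ) + d : ℤ) : ZMod (2*n)) = ((k:ℕ) : ZMod (2*n)) + ((d:ℤ) : ZMod (2*n)) := by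
    push_cast; ring
  have e2 : ((-d : ℤ) : ZMod (2*n)) = -((d:ℤ) : ZMod (2*n)) := by push_cast; ring
  rw [e1, h, e2]; ring

lemma class_zero' (n : ℕ) (hn : 0 < n) (d : ℤ) (k : Fin (2*n))
    (h : ((k:ℕ) : ZMod (2*n)) = ((d : ℤ) : ZMod (2*n))) :
    ((d - (k:ℤ) : ℤ) : ZMod (2*n)) = 0 := by
  have e1 : ((d - (k:ℤ) : ℤ) : ZMod (2*n)) = ((d:ℤ) : ZMod (2*n)) - ((k:ℕ) : ZMod (2*n)) := by
    push_cast; ring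
  rw [e1, h]; ring

lemma class_n' (n : ℕ) (hn : 0 < n) (d : ℤ) (k : Fin (2*n))
    (h : ((k:ℕ) : ZMod (2*n)) = ((d : ℤ) : ZMod (2*n)) + ((n:ℕ) : ZMod (2*n))) :
    ((d - (k:ℤ) : ℤ) : ZMod (2*n)) = ((n:ℕ) : ZMod (2*n)) := by
  have e1 : ((d - (k:ℤ) : ℤ) : ZMod (2*n)) = ((d:ℤ) : ZMod (2*n)) - ((k:ℕ) : ZMod (2*n)) := by
    push_cast; ring
  have h2n := two_n_zero n
  rw [e1, h]
  linear_combination -h2n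

lemma ne_add_n (n : ℕ) (hn : 0 < n) (a : ZMod (2*n)) : a ≠ a + ((n:ℕ) : ZMod (2*n)) := by
  intro h
  exact n_ne_zero n hn (by linear_combination -h)

/-- unsigned class sum -/

lemma sum_ind (n : ℕ) (hn : 0 < n) (c : ZMod (2*n) → ℝ) (d : ℤ) :
    ∑ k : Fin (2*n), (c (((k:ℕ)) : ZMod (2*n)) : ℂ) * (if (n:ℤ) ∣ ((k:ℤ) + d) then 1 else 0)
      = (c (((-d : ℤ) : ZMod (2*n))) : ℂ)
        + (c ((((-d : ℤ)) : ZMod (2*n)) + ((n:ℕ) : ZMod (2*n))) : ℂ) := by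
  set A := ((-d : ℤ) : ZMod (2*n)) with hA
  have hsplit : ∀ k : Fin (2*n),
      (c (((k:ℕ)) : ZMod (2*n)) : ℂ) * (if (n:ℤ) ∣ ((k:ℤ) + d) then 1 else 0)
      = (if ((k:ℕ) : ZMod (2*n)) = A then ((fun x => (c x : ℂ)) (((k:ℕ)) : ZMod (2*n))) else 0)
        + (if ((k:ℕ) : ZMod (2*n)) = A + ((n:ℕ) : ZMod (2*n)) then
            ((fun x => (c x : ℂ)) (((k:ℕ)) : ZMod (2*n))) else 0) := by
    intro k
    by_cases h1 : ((k:ℕ) : ZMod (2*n)) = A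
    · have h2 : ((k:ℕ) : ZMod (2*n)) ≠ A + ((n:ℕ) : ZMod (2*n)) := by
        rw [h1]; exact ne_add_n n hn A
      have hdvd : (n:ℤ) ∣ ((k:ℤ) + d) := (class_iff n hn d k).2 (Or.inl h1)
      rw [if_pos hdvd, if_pos h1, if_neg h2]; ring
    · by_cases h2 : ((k:ℕ) : ZMod (2*n)) = A + ((n:ℕ) : ZMod (2*n))
      · have hdvd : (n:ℤ) ∣ ((k:ℤ) + d) := (class_iff n hn d k).2 (Or.inr h2)
        rw [if_pos hdvd, if_neg h1, if_pos h2]; ring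
      · have hnd : ¬ (n:ℤ) ∣ ((k:ℤ) + d) := by
          intro h
          rcases (class_iff n hn d k).1 h with h | h
          · exact h1 h
          · exact h2 h
        rw [if_neg hnd, if_neg h1, if_neg h2]; ring
  calc ∑ k : Fin (2*n), (c (((k:ℕ)) : ZMod (2*n)) : ℂ) * (if (n:ℤ) ∣ ((k:ℤ) + d) then 1 else 0)
      = ∑ k : Fin (2*n),
        ((if ((k:ℕ) : ZMod (2*n)) = A then ((fun x => (c x : ℂ)) (((k:ℕ)) : ZMod (2*n))) else 0)
        + (if ((k:ℕ) : ZMod (2*n)) = A + ((n:ℕ) : ZMod (2*n)) then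
            ((fun x => (c x : ℂ)) (((k:ℕ)) : ZMod (2*n))) else 0)) :=
        Finset.sum_congr rfl (fun k _ => hsplit k)
    _ = _ := by
        rw [Finset.sum_add_distrib, sum_delta n hn (fun x => (c x : ℂ)) A,
          sum_delta n hn (fun x => (c x : ℂ)) (A + ((n:ℕ) : ZMod (2*n)))]

/-- signed class sum, `+` version -/
lemma sum_ind_e (n : ℕ) (hn : 0 < n) (c : ZMod (2*n) → ℝ) (d : ℤ) :
    ∑ k : Fin (2*n), (c (((k:ℕ)) : ZMod (2*n)) : ℂ)
        * (if (n:ℤ) ∣ ((k:ℤ) + d) then ee n ((k:ℤ) + d) else 0)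
      = (c (((-d : ℤ) : ZMod (2*n))) : ℂ)
        - (c ((((-d : ℤ)) : ZMod (2*n)) + ((n:ℕ) : ZMod (2*n))) : ℂ) := by
  set A := ((-d : ℤ) : ZMod (2*n)) with hA
  have hsplit : ∀ k : Fin (2*n),
      (c (((k:ℕ)) : ZMod (2*n)) : ℂ) * (if (n:ℤ) ∣ ((k:ℤ) + d) then ee n ((k:ℤ) + d) else 0)
      = (if ((k:ℕ) : ZMod (2*n)) = A then ((fun x => (c x : ℂ)) (((k:ℕ)) : ZMod (2*n))) else 0)
        + (if ((k:ℕ) : ZMod (2*n)) = A + ((n:ℕ) : ZMod (2*n)) then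
            ((fun x => -(c x : ℂ)) (((k:ℕ)) : ZMod (2*n))) else 0) := by
    intro k
    by_cases h1 : ((k:ℕ) : ZMod (2*n)) = A
    · have h2 : ((k:ℕ) : ZMod (2*n)) ≠ A + ((n:ℕ) : ZMod (2*n)) := by
        rw [h1]; exact ne_add_n n hn A
      have hdvd : (n:ℤ) ∣ ((k:ℤ) + d) := (class_iff n hn d k).2 (Or.inl h1)
      have hee : ee n ((k:ℤ) + d) = 1 := ee_class0 n hn (class_zero n hn d k h1)
      rw [if_pos hdvd, if_pos h1, if_neg h2, hee]; ring
    · by_cases h2 : ((k:ℕ) : ZMod (2*n)) = A + ((n:ℕ) : ZMod (2*n))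
      · have hdvd : (n:ℤ) ∣ ((k:ℤ) + d) := (class_iff n hn d k).2 (Or.inr h2)
        have hee : ee n ((k:ℤ) + d) = -1 := ee_classn n hn (class_n n hn d k h2)
        rw [if_pos hdvd, if_neg h1, if_pos h2, hee]; ring
      · have hnd : ¬ (n:ℤ) ∣ ((k:ℤ) + d) := by
          intro h
          rcases (class_iff n hn d k).1 h with h | h
          · exact h1 h
          · exact h2 h
        rw [if_neg hnd, if_neg h1, if_neg h2]; ring
  calc ∑ k : Fin (2*n),
        (c (((k:ℕ)) : ZMod (2*n)) : ℂ) * (if (n:ℤ) ∣ ((k:ℤ) + d) then ee n ((k:ℤ) + d) else 0)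
      = ∑ k : Fin (2*n),
        ((if ((k:ℕ) : ZMod (2*n)) = A then ((fun x => (c x : ℂ)) (((k:ℕ)) : ZMod (2*n))) else 0)
        + (if ((k:ℕ) : ZMod (2*n)) = A + ((n:ℕ) : ZMod (2*n)) then
            ((fun x => -(c x : ℂ)) (((k:ℕ)) : ZMod (2*n))) else 0)) :=
        Finset.sum_congr rfl (fun k _ => hsplit k)
    _ = _ := by
        rw [Finset.sum_add_distrib, sum_delta n hn (fun x => (c x : ℂ)) A,
          sum_delta n hn (fun x => -(c x : ℂ)) (A + ((n:ℕ) : ZMod (2*n)))]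
        ring

/-- signed class sum, mirrored version -/
lemma sum_ind_e' (n : ℕ) (hn : 0 < n) (c : ZMod (2*n) → ℝ) (d : ℤ) :
    ∑ k : Fin (2*n), (c (((k:ℕ)) : ZMod (2*n)) : ℂ)
        * (if (n:ℤ) ∣ (d - (k:ℤ)) then ee n (d - (k:ℤ)) else 0)
      = (c ((d : ZMod (2*n))) : ℂ)
        - (c (((d : ℤ) : ZMod (2*n)) + ((n:ℕ) : ZMod (2*n))) : ℂ) := by
  set A := ((d : ℤ) : ZMod (2*n)) with hA
  have hsplit : ∀ k : Fin (2*n),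
      (c (((k:ℕ)) : ZMod (2*n)) : ℂ) * (if (n:ℤ) ∣ (d - (k:ℤ)) then ee n (d - (k:ℤ)) else 0)
      = (if ((k:ℕ) : ZMod (2*n)) = A then ((fun x => (c x : ℂ)) (((k:ℕ)) : ZMod (2*n))) else 0)
        + (if ((k:ℕ) : ZMod (2*n)) = A + ((n:ℕ) : ZMod (2*n)) then
            ((fun x => -(c x : ℂ)) (((k:ℕ)) : ZMod (2*n))) else 0) := by
    intro k
    by_cases h1 : ((k:ℕ) : ZMod (2*n)) = A
    · have h2 : ((k:ℕ) : ZMod (2*n)) ≠ A + ((n:ℕ) : ZMod (2*n)) := by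
        rw [h1]; exact ne_add_n n hn A
      have hdvd : (n:ℤ) ∣ (d - (k:ℤ)) := (class_iff' n hn d k).2 (Or.inl h1)
      have hee : ee n (d - (k:ℤ)) = 1 := ee_class0 n hn (class_zero' n hn d k h1)
      rw [if_pos hdvd, if_pos h1, if_neg h2, hee]; ring
    · by_cases h2 : ((k:ℕ) : ZMod (2*n)) = A + ((n:ℕ) : ZMod (2*n))
      · have hdvd : (n:ℤ) ∣ (d - (k:ℤ)) := (class_iff' n hn d k).2 (Or.inr h2)
        have hee : ee n (d - (k:ℤ)) = -1 := ee_classn n hn (class_n' n hn d k h2)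
        rw [if_pos hdvd, if_neg h1, if_pos h2, hee]; ring
      · have hnd : ¬ (n:ℤ) ∣ (d - (k:ℤ)) := by
          intro h
          rcases (class_iff' n hn d k).1 h with h | h
          · exact h1 h
          · exact h2 h
        rw [if_neg hnd, if_neg h1, if_neg h2]; ring
  calc ∑ k : Fin (2*n),
        (c (((k:ℕ)) : ZMod (2*n)) : ℂ) * (if (n:ℤ) ∣ (d - (k:ℤ)) then ee n (d - (k:ℤ)) else 0)
      = ∑ k : Fin (2*n),
        ((if ((k:ℕ) : ZMod (2*n)) = A then ((fun x => (c x : ℂ)) (((k:ℕ)) : ZMod (2*n))) else 0)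
        + (if ((k:ℕ) : ZMod (2*n)) = A + ((n:ℕ) : ZMod (2*n)) then
            ((fun x => -(c x : ℂ)) (((k:ℕ)) : ZMod (2*n))) else 0)) :=
        Finset.sum_congr rfl (fun k _ => hsplit k)
    _ = _ := by
        rw [Finset.sum_add_distrib, sum_delta n hn (fun x => (c x : ℂ)) A,
          sum_delta n hn (fun x => -(c x : ℂ)) (A + ((n:ℕ) : ZMod (2*n)))]
        ring

lemma sum4_swap {M : Type*} [AddCommMonoid M] {i1 i2 i3 i4 : Type*}
    [Fintype i1] [Fintype i2] [Fintype i3] [Fintype i4] (f : i1 → i2 → i3 → i4 → M) :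
    ∑ a : i1, ∑ b : i2, ∑ c : i3, ∑ d : i4, f a b c d
      = ∑ b : i2, ∑ c : i3, ∑ d : i4, ∑ a : i1, f a b c d := by
  rw [Finset.sum_comm]
  refine Finset.sum_congr rfl fun b _ => ?_
  rw [Finset.sum_comm]
  refine Finset.sum_congr rfl fun c _ => ?_
  rw [Finset.sum_comm]

lemma sum3_swap {M : Type*} [AddCommMonoid M] {i1 i2 i3 : Type*}
    [Fintype i1] [Fintype i2] [Fintype i3] (f : i1 → i2 → i3 → M) :
    ∑ a : i1, ∑ b : i2, ∑ c : i3, f a b c = ∑ b : i2, ∑ c : i3, ∑ a : i1, f a b c := by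
  rw [Finset.sum_comm]
  refine Finset.sum_congr rfl fun b _ => ?_
  rw [Finset.sum_comm]

lemma fin_dvd_iff (n : ℕ) (p q : Fin n) : ((n:ℤ) ∣ ((p:ℤ) - (q:ℤ))) ↔ p = q := by
  constructor
  · intro h
    have h2 : |(p:ℤ) - (q:ℤ)| < (n:ℤ) := by
      have := p.isLt; have := q.isLt
      rw [abs_lt]; omega
    have := Int.eq_zero_of_abs_lt_dvd h h2
    have : (p:ℤ) = (q:ℤ) := by omega
    exact Fin.ext (by exact_mod_cast this)
  · rintro rfl; simp

noncomputable def VV (n : ℕ) (v : Fin n → ℝ) (t : ℤ) : ℂ :=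
  ∑ p : Fin n, (v p : ℂ) * ee n (t * (p:ℤ))

noncomputable def FF (n : ℕ) (v : Fin n → ℝ) (t : ℤ) : ℝ := Complex.normSq (VV n v t)

lemma FF_nonneg (n : ℕ) (v : Fin n → ℝ) (t : ℤ) : 0 ≤ FF n v t := Complex.normSq_nonneg _

lemma FF_expand (n : ℕ) (v : Fin n → ℝ) (t : ℤ) :
    ((FF n v t : ℝ) : ℂ)
      = ∑ p : Fin n, ∑ q : Fin n, (v p : ℂ) * (v q : ℂ) * ee n (t * ((p:ℤ) - (q:ℤ))) := by
  rw [FF, ← Complex.mul_conj, VV, map_sum, Finset.sum_mul_sum]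
  refine Finset.sum_congr rfl fun p _ => Finset.sum_congr rfl fun q _ => ?_
  rw [RingHom.map_mul, Complex.conj_ofReal, ee_conj]
  rw [show (v p : ℂ) * ee n (t * (p:ℤ)) * ((v q : ℂ) * ee n (-(t * (q:ℤ))))
      = (v p : ℂ) * (v q : ℂ) * (ee n (t * (p:ℤ)) * ee n (-(t * (q:ℤ)))) by ring, ← ee_add]
  congr 2
  ring

lemma Lambda_expand (n : ℕ) (c : ZMod (2*n) → ℝ) (Λ : ℕ → ℝ)
    (hΛ : ∀ j : ℕ, Λ j = ∑ k : Fin (2 * n),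
      c ((k : ℕ) : ZMod (2 * n)) * Real.cos (2 * Real.pi * j * k / (2 * n))) (t : ℕ) :
    ((Λ t : ℝ) : ℂ) = ∑ k : Fin (2*n), (c ((k:ℕ) : ZMod (2*n)) : ℂ)
        * ((ee n ((t:ℤ) * (k:ℤ)) + ee n (-((t:ℤ) * (k:ℤ)))) / 2) := by
  rw [hΛ t]
  push_cast
  refine Finset.sum_congr rfl fun k _ => ?_
  congr 1
  have h1 : ee n ((t:ℤ) * (k:ℤ)) + ee n (-((t:ℤ) * (k:ℤ)))
      = ((2 * Real.cos (2 * Real.pi * t * k / (2 * n)) : ℝ) : ℂ) := by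
    rw [← ee_conj, Complex.add_conj]
    norm_cast
    rw [ee, Complex.exp_ofReal_mul_I_re]
    push_cast
    ring_nf
  rw [h1]
  push_cast
  ring

lemma PE_eq (n : ℕ) (hn : 0 < n) (v : Fin n → ℝ) :
    ∑ j : Fin n, FF n v (2*(j:ℤ)) = n * ∑ p : Fin n, (v p)^2 := by
  have hC : ((∑ j : Fin n, FF n v (2*(j:ℤ)) : ℝ) : ℂ)
      = (((n : ℝ) * ∑ p : Fin n, (v p)^2 : ℝ) : ℂ) := by
    calc ((∑ j : Fin n, FF n v (2*(j:ℤ)) : ℝ) : ℂ)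
        = ∑ j : Fin n, ((FF n v (2*(j:ℤ)) : ℝ) : ℂ) := by push_cast; rfl
      _ = ∑ j : Fin n, ∑ p : Fin n, ∑ q : Fin n,
            (v p : ℂ) * (v q : ℂ) * ee n (2*(j:ℤ) * ((p:ℤ) - (q:ℤ))) :=
          Finset.sum_congr rfl fun j _ => FF_expand n v _
      _ = ∑ p : Fin n, ∑ q : Fin n, ∑ j : Fin n,
            (v p : ℂ) * (v q : ℂ) * ee n (2*(j:ℤ) * ((p:ℤ) - (q:ℤ))) := sum3_swap _
      _ = ∑ p : Fin n, ∑ q : Fin n, (v p : ℂ) * (v q : ℂ)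
            * (if (n:ℤ) ∣ ((p:ℤ)-(q:ℤ)) then (n:ℂ) else 0) := by
          refine Finset.sum_congr rfl fun p _ => Finset.sum_congr rfl fun q _ => ?_
          rw [← Finset.mul_sum, sum_ee n hn]
      _ = ∑ p : Fin n, (v p : ℂ) * (v p : ℂ) * (n:ℂ) := by
          refine Finset.sum_congr rfl fun p _ => ?_
          have hq : ∀ q : Fin n, (v p : ℂ) * (v q : ℂ)
              * (if (n:ℤ) ∣ ((p:ℤ)-(q:ℤ)) then (n:ℂ) else 0)
              = (if q = p then (v p : ℂ) * (v q : ℂ) * (n:ℂ) else 0) := by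
            intro q
            by_cases h : q = p
            · subst h; rw [if_pos ((fin_dvd_iff n q q).2 rfl), if_pos rfl]
            · have hnd : ¬ ((n:ℤ) ∣ ((p:ℤ)-(q:ℤ))) :=
                fun hd => h (((fin_dvd_iff n p q).1 hd).symm)
              rw [if_neg hnd, if_neg h, mul_zero]
          rw [Finset.sum_congr rfl (fun q _ => hq q),
            Finset.sum_ite_eq' Finset.univ p (fun q => (v p : ℂ) * (v q : ℂ) * (n:ℂ))]
          simp
      _ = (((n : ℝ) * ∑ p : Fin n, (v p)^2 : ℝ) : ℂ) := by
          push_cast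
          rw [Finset.mul_sum]
          refine Finset.sum_congr rfl fun p _ => ?_
          ring
  exact_mod_cast hC

lemma PO_eq (n : ℕ) (hn : 0 < n) (v : Fin n → ℝ) :
    ∑ j : Fin n, FF n v (2*(j:ℤ)+1) = n * ∑ p : Fin n, (v p)^2 := by
  have hC : ((∑ j : Fin n, FF n v (2*(j:ℤ)+1) : ℝ) : ℂ)
      = (((n : ℝ) * ∑ p : Fin n, (v p)^2 : ℝ) : ℂ) := by
    calc ((∑ j : Fin n, FF n v (2*(j:ℤ)+1) : ℝ) : ℂ)
        = ∑ j : Fin n, ((FF n v (2*(j:ℤ)+1) : ℝ) : ℂ) := by push_cast; rfl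
      _ = ∑ j : Fin n, ∑ p : Fin n, ∑ q : Fin n,
            (v p : ℂ) * (v q : ℂ) * ee n ((2*(j:ℤ)+1) * ((p:ℤ) - (q:ℤ))) :=
          Finset.sum_congr rfl fun j _ => FF_expand n v _
      _ = ∑ p : Fin n, ∑ q : Fin n, ∑ j : Fin n,
            (v p : ℂ) * (v q : ℂ) * ee n ((2*(j:ℤ)+1) * ((p:ℤ) - (q:ℤ))) := sum3_swap _
      _ = ∑ p : Fin n, ∑ q : Fin n, (v p : ℂ) * (v q : ℂ) * ee n ((p:ℤ) - (q:ℤ))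
            * (if (n:ℤ) ∣ ((p:ℤ)-(q:ℤ)) then (n:ℂ) else 0) := by
          refine Finset.sum_congr rfl fun p _ => Finset.sum_congr rfl fun q _ => ?_
          have hj : ∀ j : Fin n, (v p : ℂ) * (v q : ℂ) * ee n ((2*(j:ℤ)+1) * ((p:ℤ) - (q:ℤ)))
              = (v p : ℂ) * (v q : ℂ) * ee n ((p:ℤ) - (q:ℤ))
                * ee n (2*(j:ℤ) * ((p:ℤ) - (q:ℤ))) := by
            intro j
            rw [mul_assoc ((v p : ℂ) * (v q : ℂ)), ← ee_add]
            congr 2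
            ring
          rw [Finset.sum_congr rfl (fun j _ => hj j), ← Finset.mul_sum, sum_ee n hn]
      _ = ∑ p : Fin n, (v p : ℂ) * (v p : ℂ) * (n:ℂ) := by
          refine Finset.sum_congr rfl fun p _ => ?_
          have hq : ∀ q : Fin n, (v p : ℂ) * (v q : ℂ) * ee n ((p:ℤ) - (q:ℤ))
              * (if (n:ℤ) ∣ ((p:ℤ)-(q:ℤ)) then (n:ℂ) else 0)
              = (if q = p then (v p : ℂ) * (v q : ℂ) * (n:ℂ) else 0) := by
            intro q
            by_cases h : q = p
            · subst h
              rw [if_pos ((fin_dvd_iff n q q).2 rfl), if_pos rfl, sub_self, ee_zero]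
              ring
            · have hnd : ¬ ((n:ℤ) ∣ ((p:ℤ)-(q:ℤ))) :=
                fun hd => h (((fin_dvd_iff n p q).1 hd).symm)
              rw [if_neg hnd, if_neg h, mul_zero]
          rw [Finset.sum_congr rfl (fun q _ => hq q),
            Finset.sum_ite_eq' Finset.univ p (fun q => (v p : ℂ) * (v q : ℂ) * (n:ℂ))]
          simp
      _ = (((n : ℝ) * ∑ p : Fin n, (v p)^2 : ℝ) : ℂ) := by
          push_cast
          rw [Finset.mul_sum]
          refine Finset.sum_congr rfl fun p _ => ?_
          ring
  exact_mod_cast hC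

lemma c_heq (n : ℕ) (x : ZMod (2*n)) : -x + ((n:ℕ) : ZMod (2*n)) = -(x + ((n:ℕ) : ZMod (2*n))) := by
  linear_combination two_n_zero n

lemma c_pair_add (n : ℕ) (c : ZMod (2*n) → ℝ) (hc : ∀ k, c (-k) = c k) (x : ZMod (2*n)) :
    c (-x) + c (-x + ((n:ℕ) : ZMod (2*n))) = c x + c (x + ((n:ℕ) : ZMod (2*n))) := by
  rw [c_heq, hc, hc]

lemma c_pair_sub (n : ℕ) (c : ZMod (2*n) → ℝ) (hc : ∀ k, c (-k) = c k) (x : ZMod (2*n)) :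
    c (-x) - c (-x + ((n:ℕ) : ZMod (2*n))) = c x - c (x + ((n:ℕ) : ZMod (2*n))) := by
  rw [c_heq, hc, hc]

lemma SE_eq (n : ℕ) (hn : 0 < n) (c : ZMod (2*n) → ℝ) (hc : ∀ k, c (-k) = c k)
    (Λ : ℕ → ℝ) (hΛ : ∀ j : ℕ, Λ j = ∑ k : Fin (2 * n),
      c ((k : ℕ) : ZMod (2 * n)) * Real.cos (2 * Real.pi * j * k / (2 * n)))
    (v : Fin n → ℝ) :
    ∑ j : Fin n, Λ (2*(j:ℕ)) * FF n v (2*(j:ℤ))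
      = n * ∑ p : Fin n, ∑ q : Fin n, v p * v q *
          (c ((((p:ℤ)-(q:ℤ)) : ℤ) : ZMod (2*n))
            + c (((((p:ℤ)-(q:ℤ)) : ℤ) : ZMod (2*n)) + ((n:ℕ) : ZMod (2*n)))) := by
  have hC : ((∑ j : Fin n, Λ (2*(j:ℕ)) * FF n v (2*(j:ℤ)) : ℝ) : ℂ)
      = (((n:ℝ) * ∑ p : Fin n, ∑ q : Fin n, v p * v q *
          (c ((((p:ℤ)-(q:ℤ)) : ℤ) : ZMod (2*n))
            + c (((((p:ℤ)-(q:ℤ)) : ℤ) : ZMod (2*n)) + ((n:ℕ) : ZMod (2*n)))) : ℝ) : ℂ) := by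
    calc ((∑ j : Fin n, Λ (2*(j:ℕ)) * FF n v (2*(j:ℤ)) : ℝ) : ℂ)
        = ∑ j : Fin n, ((Λ (2*(j:ℕ)) : ℝ) : ℂ) * ((FF n v (2*(j:ℤ)) : ℝ) : ℂ) := by
          push_cast; rfl
      _ = ∑ j : Fin n, ∑ k : Fin (2*n), ∑ p : Fin n, ∑ q : Fin n,
            (c ((k:ℕ) : ZMod (2*n)) : ℂ)
              * ((ee n (((2*(j:ℕ) : ℕ):ℤ) * (k:ℤ)) + ee n (-(((2*(j:ℕ) : ℕ):ℤ) * (k:ℤ)))) / 2)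
              * ((v p : ℂ) * (v q : ℂ) * ee n (2*(j:ℤ) * ((p:ℤ) - (q:ℤ)))) := by
          refine Finset.sum_congr rfl fun j _ => ?_
          rw [Lambda_expand n c Λ hΛ (2*(j:ℕ)), FF_expand n v (2*(j:ℤ)), Finset.sum_mul_sum]
          simp only [Finset.mul_sum]
      _ = ∑ k : Fin (2*n), ∑ p : Fin n, ∑ q : Fin n, ∑ j : Fin n,
            (c ((k:ℕ) : ZMod (2*n)) : ℂ)
              * ((ee n (((2*(j:ℕ) : ℕ):ℤ) * (k:ℤ)) + ee n (-(((2*(j:ℕ) : ℕ):ℤ) * (k:ℤ)))) / 2)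
              * ((v p : ℂ) * (v q : ℂ) * ee n (2*(j:ℤ) * ((p:ℤ) - (q:ℤ)))) := sum4_swap _
      _ = ∑ k : Fin (2*n), ∑ p : Fin n, ∑ q : Fin n,
            (((c ((k:ℕ) : ZMod (2*n)) : ℂ) * ((v p : ℂ) * (v q : ℂ)) / 2)
              * (if (n:ℤ) ∣ ((k:ℤ) + ((p:ℤ) - (q:ℤ))) then (n:ℂ) else 0)
            + ((c ((k:ℕ) : ZMod (2*n)) : ℂ) * ((v p : ℂ) * (v q : ℂ)) / 2)
              * (if (n:ℤ) ∣ (((p:ℤ) - (q:ℤ)) - (k:ℤ)) then (n:ℂ) else 0)) := by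
          refine Finset.sum_congr rfl fun k _ => Finset.sum_congr rfl fun p _ =>
            Finset.sum_congr rfl fun q _ => ?_
          have hj : ∀ j : Fin n,
              (c ((k:ℕ) : ZMod (2*n)) : ℂ)
                * ((ee n (((2*(j:ℕ) : ℕ):ℤ) * (k:ℤ)) + ee n (-(((2*(j:ℕ) : ℕ):ℤ) * (k:ℤ)))) / 2)
                * ((v p : ℂ) * (v q : ℂ) * ee n (2*(j:ℤ) * ((p:ℤ) - (q:ℤ))))
              = ((c ((k:ℕ) : ZMod (2*n)) : ℂ) * ((v p : ℂ) * (v q : ℂ)) / 2)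
                  * ee n (2*(j:ℤ) * ((k:ℤ) + ((p:ℤ) - (q:ℤ))))
                + ((c ((k:ℕ) : ZMod (2*n)) : ℂ) * ((v p : ℂ) * (v q : ℂ)) / 2)
                  * ee n (2*(j:ℤ) * (((p:ℤ) - (q:ℤ)) - (k:ℤ))) := by
            intro j
            have h1 : ee n (((2*(j:ℕ) : ℕ):ℤ) * (k:ℤ)) * ee n (2*(j:ℤ) * ((p:ℤ) - (q:ℤ)))
                = ee n (2*(j:ℤ) * ((k:ℤ) + ((p:ℤ) - (q:ℤ)))) := by
              rw [← ee_add]; congr 1; push_cast; ring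
            have h2 : ee n (-(((2*(j:ℕ) : ℕ):ℤ) * (k:ℤ))) * ee n (2*(j:ℤ) * ((p:ℤ) - (q:ℤ)))
                = ee n (2*(j:ℤ) * (((p:ℤ) - (q:ℤ)) - (k:ℤ))) := by
              rw [← ee_add]; congr 1; push_cast; ring
            rw [← h1, ← h2]; ring
          rw [Finset.sum_congr rfl (fun j _ => hj j), Finset.sum_add_distrib,
            ← Finset.mul_sum, ← Finset.mul_sum, sum_ee n hn, sum_ee n hn]
      _ = ∑ p : Fin n, ∑ q : Fin n, (v p : ℂ) * (v q : ℂ) * (n:ℂ) *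
            ((c ((((p:ℤ)-(q:ℤ)) : ℤ) : ZMod (2*n)) : ℂ)
              + (c (((((p:ℤ)-(q:ℤ)) : ℤ) : ZMod (2*n)) + ((n:ℕ) : ZMod (2*n))) : ℂ)) := by
          rw [sum3_swap]
          refine Finset.sum_congr rfl fun p _ => Finset.sum_congr rfl fun q _ => ?_
          rw [Finset.sum_add_distrib]
          have hk1 : ∀ k : Fin (2*n),
              ((c ((k:ℕ) : ZMod (2*n)) : ℂ) * ((v p : ℂ) * (v q : ℂ)) / 2)
                * (if (n:ℤ) ∣ ((k:ℤ) + ((p:ℤ) - (q:ℤ))) then (n:ℂ) else 0)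
              = ((v p : ℂ) * (v q : ℂ) * (n:ℂ) / 2)
                * ((c ((k:ℕ) : ZMod (2*n)) : ℂ)
                    * (if (n:ℤ) ∣ ((k:ℤ) + ((p:ℤ) - (q:ℤ))) then 1 else 0)) := by
            intro k
            by_cases h : (n:ℤ) ∣ ((k:ℤ) + ((p:ℤ) - (q:ℤ)))
            · rw [if_pos h, if_pos h]; ring
            · rw [if_neg h, if_neg h]; ring
          have hk2 : ∀ k : Fin (2*n),
              ((c ((k:ℕ) : ZMod (2*n)) : ℂ) * ((v p : ℂ) * (v q : ℂ)) / 2)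
                * (if (n:ℤ) ∣ (((p:ℤ) - (q:ℤ)) - (k:ℤ)) then (n:ℂ) else 0)
              = ((v p : ℂ) * (v q : ℂ) * (n:ℂ) / 2)
                * ((c ((k:ℕ) : ZMod (2*n)) : ℂ)
                    * (if (n:ℤ) ∣ ((k:ℤ) + (-((p:ℤ) - (q:ℤ)))) then 1 else 0)) := by
            intro k
            have hiff : ((n:ℤ) ∣ (((p:ℤ) - (q:ℤ)) - (k:ℤ)))
                ↔ ((n:ℤ) ∣ ((k:ℤ) + (-((p:ℤ) - (q:ℤ))))) := by
              rw [dvd_sub_comm]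
              constructor <;> intro h <;> [skip; skip] <;>
                · obtain ⟨u, hu⟩ := h; exact ⟨u, by linarith⟩
            by_cases h : (n:ℤ) ∣ (((p:ℤ) - (q:ℤ)) - (k:ℤ))
            · rw [if_pos h, if_pos (hiff.1 h)]; ring
            · rw [if_neg h, if_neg (fun hh => h (hiff.2 hh))]; ring
          rw [Finset.sum_congr rfl (fun k _ => hk1 k), Finset.sum_congr rfl (fun k _ => hk2 k),
            ← Finset.mul_sum, ← Finset.mul_sum, sum_ind n hn c ((p:ℤ) - (q:ℤ)),
            sum_ind n hn c (-((p:ℤ) - (q:ℤ)))]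
          have e1 : ((-((p:ℤ)-(q:ℤ)) : ℤ) : ZMod (2*n)) = -((((p:ℤ)-(q:ℤ)) : ℤ) : ZMod (2*n)) := by
            push_cast; ring
          have e2 : ((-(-((p:ℤ)-(q:ℤ))) : ℤ) : ZMod (2*n)) = ((((p:ℤ)-(q:ℤ)) : ℤ) : ZMod (2*n)) := by
            push_cast; ring
          rw [e1, e2]
          have hpair := c_pair_add n c hc (((((p:ℤ)-(q:ℤ)) : ℤ)) : ZMod (2*n))
          have hpairC : (c (-(((((p:ℤ)-(q:ℤ)) : ℤ)) : ZMod (2*n))) : ℂ)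
              + (c (-(((((p:ℤ)-(q:ℤ)) : ℤ)) : ZMod (2*n)) + ((n:ℕ) : ZMod (2*n))) : ℂ)
              = (c ((((p:ℤ)-(q:ℤ)) : ℤ) : ZMod (2*n)) : ℂ)
                + (c (((((p:ℤ)-(q:ℤ)) : ℤ) : ZMod (2*n)) + ((n:ℕ) : ZMod (2*n))) : ℂ) := by
            exact_mod_cast congrArg (fun x : ℝ => (x : ℂ)) hpair
          rw [hpairC]
          ring
      _ = (((n:ℝ) * ∑ p : Fin n, ∑ q : Fin n, v p * v q *
            (c ((((p:ℤ)-(q:ℤ)) : ℤ) : ZMod (2*n))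
              + c (((((p:ℤ)-(q:ℤ)) : ℤ) : ZMod (2*n)) + ((n:ℕ) : ZMod (2*n)))) : ℝ) : ℂ) := by
          push_cast
          rw [Finset.mul_sum]
          refine Finset.sum_congr rfl fun p _ => ?_
          rw [Finset.mul_sum]
          refine Finset.sum_congr rfl fun q _ => ?_
          ring
  exact_mod_cast hC

lemma SO_eq (n : ℕ) (hn : 0 < n) (c : ZMod (2*n) → ℝ) (hc : ∀ k, c (-k) = c k)
    (Λ : ℕ → ℝ) (hΛ : ∀ j : ℕ, Λ j = ∑ k : Fin (2 * n),
      c ((k : ℕ) : ZMod (2 * n)) * Real.cos (2 * Real.pi * j * k / (2 * n)))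
    (v : Fin n → ℝ) :
    ∑ j : Fin n, Λ (2*(j:ℕ)+1) * FF n v (2*(j:ℤ)+1)
      = n * ∑ p : Fin n, ∑ q : Fin n, v p * v q *
          (c ((((p:ℤ)-(q:ℤ)) : ℤ) : ZMod (2*n))
            - c (((((p:ℤ)-(q:ℤ)) : ℤ) : ZMod (2*n)) + ((n:ℕ) : ZMod (2*n)))) := by
  have hC : ((∑ j : Fin n, Λ (2*(j:ℕ)+1) * FF n v (2*(j:ℤ)+1) : ℝ) : ℂ)
      = (((n:ℝ) * ∑ p : Fin n, ∑ q : Fin n, v p * v q *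
          (c ((((p:ℤ)-(q:ℤ)) : ℤ) : ZMod (2*n))
            - c (((((p:ℤ)-(q:ℤ)) : ℤ) : ZMod (2*n)) + ((n:ℕ) : ZMod (2*n)))) : ℝ) : ℂ) := by
    calc ((∑ j : Fin n, Λ (2*(j:ℕ)+1) * FF n v (2*(j:ℤ)+1) : ℝ) : ℂ)
        = ∑ j : Fin n, ((Λ (2*(j:ℕ)+1) : ℝ) : ℂ) * ((FF n v (2*(j:ℤ)+1) : ℝ) : ℂ) := by
          push_cast; rfl
      _ = ∑ j : Fin n, ∑ k : Fin (2*n), ∑ p : Fin n, ∑ q : Fin n,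
            (c ((k:ℕ) : ZMod (2*n)) : ℂ)
              * ((ee n (((2*(j:ℕ)+1 : ℕ):ℤ) * (k:ℤ)) + ee n (-(((2*(j:ℕ)+1 : ℕ):ℤ) * (k:ℤ)))) / 2)
              * ((v p : ℂ) * (v q : ℂ) * ee n ((2*(j:ℤ)+1) * ((p:ℤ) - (q:ℤ)))) := by
          refine Finset.sum_congr rfl fun j _ => ?_
          rw [Lambda_expand n c Λ hΛ (2*(j:ℕ)+1), FF_expand n v (2*(j:ℤ)+1), Finset.sum_mul_sum]
          simp only [Finset.mul_sum]
      _ = ∑ k : Fin (2*n), ∑ p : Fin n, ∑ q : Fin n, ∑ j : Fin n,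
            (c ((k:ℕ) : ZMod (2*n)) : ℂ)
              * ((ee n (((2*(j:ℕ)+1 : ℕ):ℤ) * (k:ℤ)) + ee n (-(((2*(j:ℕ)+1 : ℕ):ℤ) * (k:ℤ)))) / 2)
              * ((v p : ℂ) * (v q : ℂ) * ee n ((2*(j:ℤ)+1) * ((p:ℤ) - (q:ℤ)))) := sum4_swap _
      _ = ∑ k : Fin (2*n), ∑ p : Fin n, ∑ q : Fin n,
            (((c ((k:ℕ) : ZMod (2*n)) : ℂ) * ((v p : ℂ) * (v q : ℂ)) / 2)
              * (ee n ((k:ℤ) + ((p:ℤ) - (q:ℤ)))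
                  * (if (n:ℤ) ∣ ((k:ℤ) + ((p:ℤ) - (q:ℤ))) then (n:ℂ) else 0))
            + ((c ((k:ℕ) : ZMod (2*n)) : ℂ) * ((v p : ℂ) * (v q : ℂ)) / 2)
              * (ee n (((p:ℤ) - (q:ℤ)) - (k:ℤ))
                  * (if (n:ℤ) ∣ (((p:ℤ) - (q:ℤ)) - (k:ℤ)) then (n:ℂ) else 0))) := by
          refine Finset.sum_congr rfl fun k _ => Finset.sum_congr rfl fun p _ =>
            Finset.sum_congr rfl fun q _ => ?_
          have hj : ∀ j : Fin n,
              (c ((k:ℕ) : ZMod (2*n)) : ℂ)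
                * ((ee n (((2*(j:ℕ)+1 : ℕ):ℤ) * (k:ℤ)) + ee n (-(((2*(j:ℕ)+1 : ℕ):ℤ) * (k:ℤ)))) / 2)
                * ((v p : ℂ) * (v q : ℂ) * ee n ((2*(j:ℤ)+1) * ((p:ℤ) - (q:ℤ))))
              = ((c ((k:ℕ) : ZMod (2*n)) : ℂ) * ((v p : ℂ) * (v q : ℂ)) / 2)
                  * (ee n ((k:ℤ) + ((p:ℤ) - (q:ℤ)))
                      * ee n (2*(j:ℤ) * ((k:ℤ) + ((p:ℤ) - (q:ℤ)))))
                + ((c ((k:ℕ) : ZMod (2*n)) : ℂ) * ((v p : ℂ) * (v q : ℂ)) / 2)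
                  * (ee n (((p:ℤ) - (q:ℤ)) - (k:ℤ))
                      * ee n (2*(j:ℤ) * (((p:ℤ) - (q:ℤ)) - (k:ℤ)))) := by
            intro j
            have h1 : ee n (((2*(j:ℕ)+1 : ℕ):ℤ) * (k:ℤ)) * ee n ((2*(j:ℤ)+1) * ((p:ℤ) - (q:ℤ)))
                = ee n ((k:ℤ) + ((p:ℤ) - (q:ℤ))) * ee n (2*(j:ℤ) * ((k:ℤ) + ((p:ℤ) - (q:ℤ)))) := by
              rw [← ee_add, ← ee_add]; congr 1; push_cast; ring
            have h2 : ee n (-(((2*(j:ℕ)+1 : ℕ):ℤ) * (k:ℤ))) * ee n ((2*(j:ℤ)+1) * ((p:ℤ) - (q:ℤ)))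
                = ee n (((p:ℤ) - (q:ℤ)) - (k:ℤ)) * ee n (2*(j:ℤ) * (((p:ℤ) - (q:ℤ)) - (k:ℤ))) := by
              rw [← ee_add, ← ee_add]; congr 1; push_cast; ring
            rw [← h1, ← h2]; ring
          rw [Finset.sum_congr rfl (fun j _ => hj j), Finset.sum_add_distrib]
          congr 1
          · rw [← Finset.mul_sum, ← Finset.mul_sum, sum_ee n hn]
          · rw [← Finset.mul_sum, ← Finset.mul_sum, sum_ee n hn]
      _ = ∑ p : Fin n, ∑ q : Fin n, (v p : ℂ) * (v q : ℂ) * (n:ℂ) *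
            ((c ((((p:ℤ)-(q:ℤ)) : ℤ) : ZMod (2*n)) : ℂ)
              - (c (((((p:ℤ)-(q:ℤ)) : ℤ) : ZMod (2*n)) + ((n:ℕ) : ZMod (2*n))) : ℂ)) := by
          rw [sum3_swap]
          refine Finset.sum_congr rfl fun p _ => Finset.sum_congr rfl fun q _ => ?_
          rw [Finset.sum_add_distrib]
          have hk1 : ∀ k : Fin (2*n),
              ((c ((k:ℕ) : ZMod (2*n)) : ℂ) * ((v p : ℂ) * (v q : ℂ)) / 2)
                * (ee n ((k:ℤ) + ((p:ℤ) - (q:ℤ)))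
                    * (if (n:ℤ) ∣ ((k:ℤ) + ((p:ℤ) - (q:ℤ))) then (n:ℂ) else 0))
              = ((v p : ℂ) * (v q : ℂ) * (n:ℂ) / 2)
                * ((c ((k:ℕ) : ZMod (2*n)) : ℂ)
                    * (if (n:ℤ) ∣ ((k:ℤ) + ((p:ℤ) - (q:ℤ)))
                        then ee n ((k:ℤ) + ((p:ℤ) - (q:ℤ))) else 0)) := by
            intro k
            by_cases h : (n:ℤ) ∣ ((k:ℤ) + ((p:ℤ) - (q:ℤ)))
            · rw [if_pos h, if_pos h]; ring
            · rw [if_neg h, if_neg h]; ring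
          have hk2 : ∀ k : Fin (2*n),
              ((c ((k:ℕ) : ZMod (2*n)) : ℂ) * ((v p : ℂ) * (v q : ℂ)) / 2)
                * (ee n (((p:ℤ) - (q:ℤ)) - (k:ℤ))
                    * (if (n:ℤ) ∣ (((p:ℤ) - (q:ℤ)) - (k:ℤ)) then (n:ℂ) else 0))
              = ((v p : ℂ) * (v q : ℂ) * (n:ℂ) / 2)
                * ((c ((k:ℕ) : ZMod (2*n)) : ℂ)
                    * (if (n:ℤ) ∣ (((p:ℤ) - (q:ℤ)) - (k:ℤ))
                        then ee n (((p:ℤ) - (q:ℤ)) - (k:ℤ)) else 0)) := by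
            intro k
            by_cases h : (n:ℤ) ∣ (((p:ℤ) - (q:ℤ)) - (k:ℤ))
            · rw [if_pos h, if_pos h]; ring
            · rw [if_neg h, if_neg h]; ring
          rw [Finset.sum_congr rfl (fun k _ => hk1 k), Finset.sum_congr rfl (fun k _ => hk2 k),
            ← Finset.mul_sum, ← Finset.mul_sum, sum_ind_e n hn c ((p:ℤ) - (q:ℤ)),
            sum_ind_e' n hn c ((p:ℤ) - (q:ℤ))]
          have e1 : ((-((p:ℤ)-(q:ℤ)) : ℤ) : ZMod (2*n)) = -((((p:ℤ)-(q:ℤ)) : ℤ) : ZMod (2*n)) := by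
            push_cast; ring
          rw [e1]
          have hpair := c_pair_sub n c hc (((((p:ℤ)-(q:ℤ)) : ℤ)) : ZMod (2*n))
          have hpairC : (c (-(((((p:ℤ)-(q:ℤ)) : ℤ)) : ZMod (2*n))) : ℂ)
              - (c (-(((((p:ℤ)-(q:ℤ)) : ℤ)) : ZMod (2*n)) + ((n:ℕ) : ZMod (2*n))) : ℂ)
              = (c ((((p:ℤ)-(q:ℤ)) : ℤ) : ZMod (2*n)) : ℂ)
                - (c (((((p:ℤ)-(q:ℤ)) : ℤ) : ZMod (2*n)) + ((n:ℕ) : ZMod (2*n))) : ℂ) := by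
            exact_mod_cast congrArg (fun x : ℝ => (x : ℂ)) hpair
          rw [hpairC]
          ring
      _ = (((n:ℝ) * ∑ p : Fin n, ∑ q : Fin n, v p * v q *
            (c ((((p:ℤ)-(q:ℤ)) : ℤ) : ZMod (2*n))
              - c (((((p:ℤ)-(q:ℤ)) : ℤ) : ZMod (2*n)) + ((n:ℕ) : ZMod (2*n)))) : ℝ) : ℂ) := by
          push_cast
          rw [Finset.mul_sum]
          refine Finset.sum_congr rfl fun p _ => ?_
          rw [Finset.mul_sum]
          refine Finset.sum_congr rfl fun q _ => ?_
          ring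
  exact_mod_cast hC

end Stmt9Aux

open Stmt9Aux in
/-- Ferreira's eigenvalue bounds: the eigenvalues of a symmetric Toeplitz matrix `N`
(the `n × n` leading block of a `2n × 2n` symmetric circulant matrix `C` with symbol `c`)
are bounded using the explicit eigenvalues `Λ j = ∑_k c k cos(2π j k / (2n))` of `C`:
`(min over even j) + (min over odd j) ≤ 2 μ ≤ (max over even j) + (max over odd j)`
for every eigenvalue `μ` of `N`. -/
theorem stmt_9 (n : ℕ) (hn : 0 < n) (c : ZMod (2 * n) → ℝ)
    (hc_even : ∀ k, c (-k) = c k)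
    (N : Matrix (Fin n) (Fin n) ℝ)
    (hN : ∀ i j : Fin n, N i j = c (((i : ℕ) : ZMod (2 * n)) - ((j : ℕ) : ZMod (2 * n))))
    (Λ : ℕ → ℝ)
    (hΛ : ∀ j : ℕ, Λ j = ∑ k : Fin (2 * n),
      c ((k : ℕ) : ZMod (2 * n)) * Real.cos (2 * π * j * k / (2 * n)))
    (μ : ℝ) (hμ : ∃ v : Fin n → ℝ, v ≠ 0 ∧ N.mulVec v = μ • v) :
    sInf {x | ∃ j < 2 * n, Even j ∧ x = Λ j} + sInf {x | ∃ j < 2 * n, Odd j ∧ x = Λ j}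
      ≤ 2 * μ ∧
    2 * μ ≤
      sSup {x | ∃ j < 2 * n, Even j ∧ x = Λ j} + sSup {x | ∃ j < 2 * n, Odd j ∧ x = Λ j} := by
  obtain ⟨v, hv0, hvN⟩ := hμ
  have hrow : ∀ p : Fin n, ∑ q : Fin n, N p q * v q = μ * v p := by
    intro p
    have h := congrFun hvN p
    simpa [Matrix.mulVec, dotProduct] using h
  have hNc : ∀ p q : Fin n, N p q = c ((((p:ℤ)-(q:ℤ)) : ℤ) : ZMod (2*n)) := by
    intro p q
    rw [hN]
    congr 1
    push_cast
    ring
  set W := ∑ p : Fin n, (v p)^2 with hWdef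
  have hWpos : 0 < W := by
    obtain ⟨p, hp⟩ := Function.ne_iff.1 hv0
    exact Finset.sum_pos' (fun i _ => sq_nonneg _)
      ⟨p, Finset.mem_univ p, lt_of_le_of_ne (sq_nonneg _) (Ne.symm (pow_ne_zero 2 hp))⟩
  have hSE := SE_eq n hn c hc_even Λ hΛ v
  have hSO := SO_eq n hn c hc_even Λ hΛ v
  have hPE := PE_eq n hn v
  have hPO := PO_eq n hn v
  have hQ : (∑ p : Fin n, ∑ q : Fin n, v p * v q *
          (c ((((p:ℤ)-(q:ℤ)) : ℤ) : ZMod (2*n))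
            + c (((((p:ℤ)-(q:ℤ)) : ℤ) : ZMod (2*n)) + ((n:ℕ) : ZMod (2*n)))))
      + (∑ p : Fin n, ∑ q : Fin n, v p * v q *
          (c ((((p:ℤ)-(q:ℤ)) : ℤ) : ZMod (2*n))
            - c (((((p:ℤ)-(q:ℤ)) : ℤ) : ZMod (2*n)) + ((n:ℕ) : ZMod (2*n)))))
      = 2 * (μ * W) := by
    rw [← Finset.sum_add_distrib]
    have hpq : ∀ p : Fin n, (∑ q : Fin n, v p * v q *
          (c ((((p:ℤ)-(q:ℤ)) : ℤ) : ZMod (2*n))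
            + c (((((p:ℤ)-(q:ℤ)) : ℤ) : ZMod (2*n)) + ((n:ℕ) : ZMod (2*n)))))
        + (∑ q : Fin n, v p * v q *
          (c ((((p:ℤ)-(q:ℤ)) : ℤ) : ZMod (2*n))
            - c (((((p:ℤ)-(q:ℤ)) : ℤ) : ZMod (2*n)) + ((n:ℕ) : ZMod (2*n)))))
        = 2 * (v p * (μ * v p)) := by
      intro p
      rw [← Finset.sum_add_distrib]
      have hterm : ∀ q : Fin n, v p * v q *
            (c ((((p:ℤ)-(q:ℤ)) : ℤ) : ZMod (2*n))
              + c (((((p:ℤ)-(q:ℤ)) : ℤ) : ZMod (2*n)) + ((n:ℕ) : ZMod (2*n))))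
          + v p * v q *
            (c ((((p:ℤ)-(q:ℤ)) : ℤ) : ZMod (2*n))
              - c (((((p:ℤ)-(q:ℤ)) : ℤ) : ZMod (2*n)) + ((n:ℕ) : ZMod (2*n))))
          = 2 * v p * (N p q * v q) := by
        intro q
        rw [hNc p q]
        ring
      rw [Finset.sum_congr rfl (fun q _ => hterm q), ← Finset.mul_sum, hrow p]
      ring
    rw [Finset.sum_congr rfl (fun p _ => hpq p), ← Finset.mul_sum]
    have : ∑ p : Fin n, v p * (μ * v p) = μ * W := by
      rw [hWdef, Finset.mul_sum]
      exact Finset.sum_congr rfl fun p _ => by ring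
    rw [this]
  have hsum : (∑ j : Fin n, Λ (2*(j:ℕ)) * FF n v (2*(j:ℤ)))
      + (∑ j : Fin n, Λ (2*(j:ℕ)+1) * FF n v (2*(j:ℤ)+1)) = (2 * μ) * ((n:ℝ) * W) := by
    rw [hSE, hSO, ← mul_add, hQ]
    ring
  have hfinE : {x | ∃ j < 2 * n, Even j ∧ x = Λ j}.Finite := by
    apply Set.Finite.subset ((Set.finite_Iio (2*n)).image Λ)
    rintro x ⟨j, hj, _, rfl⟩
    exact ⟨j, hj, rfl⟩
  have hfinO : {x | ∃ j < 2 * n, Odd j ∧ x = Λ j}.Finite := by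
    apply Set.Finite.subset ((Set.finite_Iio (2*n)).image Λ)
    rintro x ⟨j, hj, _, rfl⟩
    exact ⟨j, hj, rfl⟩
  have hmemE : ∀ j : Fin n, Λ (2*(j:ℕ)) ∈ {x | ∃ j < 2 * n, Even j ∧ x = Λ j} := by
    intro j
    exact ⟨2*(j:ℕ), by have := j.isLt; omega, even_two_mul _, rfl⟩
  have hmemO : ∀ j : Fin n, Λ (2*(j:ℕ)+1) ∈ {x | ∃ j < 2 * n, Odd j ∧ x = Λ j} := by
    intro j
    exact ⟨2*(j:ℕ)+1, by have := j.isLt; omega, odd_two_mul_add_one _, rfl⟩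
  have hnW : (0:ℝ) < (n:ℝ) * W := mul_pos (by exact_mod_cast hn) hWpos
  constructor
  · have hlowE : sInf {x | ∃ j < 2 * n, Even j ∧ x = Λ j} * ((n:ℝ) * W)
        ≤ ∑ j : Fin n, Λ (2*(j:ℕ)) * FF n v (2*(j:ℤ)) := by
      calc sInf {x | ∃ j < 2 * n, Even j ∧ x = Λ j} * ((n:ℝ) * W)
          = ∑ j : Fin n, sInf {x | ∃ j < 2 * n, Even j ∧ x = Λ j} * FF n v (2*(j:ℤ)) := by
            rw [← Finset.mul_sum, hPE]
        _ ≤ ∑ j : Fin n, Λ (2*(j:ℕ)) * FF n v (2*(j:ℤ)) :=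
            Finset.sum_le_sum fun j _ => mul_le_mul_of_nonneg_right
              (csInf_le hfinE.bddBelow (hmemE j)) (FF_nonneg n v _)
    have hlowO : sInf {x | ∃ j < 2 * n, Odd j ∧ x = Λ j} * ((n:ℝ) * W)
        ≤ ∑ j : Fin n, Λ (2*(j:ℕ)+1) * FF n v (2*(j:ℤ)+1) := by
      calc sInf {x | ∃ j < 2 * n, Odd j ∧ x = Λ j} * ((n:ℝ) * W)
          = ∑ j : Fin n, sInf {x | ∃ j < 2 * n, Odd j ∧ x = Λ j} * FF n v (2*(j:ℤ)+1) := by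
            rw [← Finset.mul_sum, hPO]
        _ ≤ ∑ j : Fin n, Λ (2*(j:ℕ)+1) * FF n v (2*(j:ℤ)+1) :=
            Finset.sum_le_sum fun j _ => mul_le_mul_of_nonneg_right
              (csInf_le hfinO.bddBelow (hmemO j)) (FF_nonneg n v _)
    have h1 : (sInf {x | ∃ j < 2 * n, Even j ∧ x = Λ j}
        + sInf {x | ∃ j < 2 * n, Odd j ∧ x = Λ j}) * ((n:ℝ) * W) ≤ (2 * μ) * ((n:ℝ) * W) := by
      calc (sInf {x | ∃ j < 2 * n, Even j ∧ x = Λ j}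
            + sInf {x | ∃ j < 2 * n, Odd j ∧ x = Λ j}) * ((n:ℝ) * W)
          = sInf {x | ∃ j < 2 * n, Even j ∧ x = Λ j} * ((n:ℝ) * W)
            + sInf {x | ∃ j < 2 * n, Odd j ∧ x = Λ j} * ((n:ℝ) * W) := by ring
        _ ≤ (∑ j : Fin n, Λ (2*(j:ℕ)) * FF n v (2*(j:ℤ)))
            + (∑ j : Fin n, Λ (2*(j:ℕ)+1) * FF n v (2*(j:ℤ)+1)) := add_le_add hlowE hlowO
        _ = (2 * μ) * ((n:ℝ) * W) := hsum
    exact (mul_le_mul_iff_of_pos_right hnW).1 h1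
  · have hupE : (∑ j : Fin n, Λ (2*(j:ℕ)) * FF n v (2*(j:ℤ)))
        ≤ sSup {x | ∃ j < 2 * n, Even j ∧ x = Λ j} * ((n:ℝ) * W) := by
      calc (∑ j : Fin n, Λ (2*(j:ℕ)) * FF n v (2*(j:ℤ)))
          ≤ ∑ j : Fin n, sSup {x | ∃ j < 2 * n, Even j ∧ x = Λ j} * FF n v (2*(j:ℤ)) :=
            Finset.sum_le_sum fun j _ => mul_le_mul_of_nonneg_right
              (le_csSup hfinE.bddAbove (hmemE j)) (FF_nonneg n v _)
        _ = sSup {x | ∃ j < 2 * n, Even j ∧ x = Λ j} * ((n:ℝ) * W) := by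
            rw [← Finset.mul_sum, hPE]
    have hupO : (∑ j : Fin n, Λ (2*(j:ℕ)+1) * FF n v (2*(j:ℤ)+1))
        ≤ sSup {x | ∃ j < 2 * n, Odd j ∧ x = Λ j} * ((n:ℝ) * W) := by
      calc (∑ j : Fin n, Λ (2*(j:ℕ)+1) * FF n v (2*(j:ℤ)+1))
          ≤ ∑ j : Fin n, sSup {x | ∃ j < 2 * n, Odd j ∧ x = Λ j} * FF n v (2*(j:ℤ)+1) :=
            Finset.sum_le_sum fun j _ => mul_le_mul_of_nonneg_right
              (le_csSup hfinO.bddAbove (hmemO j)) (FF_nonneg n v _)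
        _ = sSup {x | ∃ j < 2 * n, Odd j ∧ x = Λ j} * ((n:ℝ) * W) := by
            rw [← Finset.mul_sum, hPO]
    have h1 : (2 * μ) * ((n:ℝ) * W) ≤ (sSup {x | ∃ j < 2 * n, Even j ∧ x = Λ j}
        + sSup {x | ∃ j < 2 * n, Odd j ∧ x = Λ j}) * ((n:ℝ) * W) := by
      calc (2 * μ) * ((n:ℝ) * W)
          = (∑ j : Fin n, Λ (2*(j:ℕ)) * FF n v (2*(j:ℤ)))
            + (∑ j : Fin n, Λ (2*(j:ℕ)+1) * FF n v (2*(j:ℤ)+1)) := hsum.symm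
        _ ≤ sSup {x | ∃ j < 2 * n, Even j ∧ x = Λ j} * ((n:ℝ) * W)
            + sSup {x | ∃ j < 2 * n, Odd j ∧ x = Λ j} * ((n:ℝ) * W) := add_le_add hupE hupO
        _ = (sSup {x | ∃ j < 2 * n, Even j ∧ x = Λ j}
            + sSup {x | ∃ j < 2 * n, Odd j ∧ x = Λ j}) * ((n:ℝ) * W) := by ring
    exact (mul_le_mul_iff_of_pos_right hnW).1 h1
end

section
/- Let ν ∈ L¹(ℝ) be even with ∫_ℝ ν = 1, and suppose ν is exponentially localized: |∫_{|x| ≥ R} ν(x) dx| ≤ 2 e^{−ηR} for some η > 0 and all large R. Suppose the Fourier symbol satisfies L̂(k) := 1 − ∫_ℝ ν(x) cos(kx) dx = M(k) k²/(1 + k²) with M(k) ≥ c_M > 0 for all real k. Then for every integer j ≥ 1 and all sufficiently large L > 0, the quantity Λ_j = 1 − ∫_{−2L}^{2L} ν(x) cos(jπx/(2L)) dx satisfies Λ_j ≥ c_M π²/((2L)² + π²) − 2 e^{−ηL} > 0. -/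
open MeasureTheory Real Set Filter Topology

lemma triangle_swap (ν g : ℝ → ℝ) (hν : Integrable ν) (hg : Measurable g)
    (C : ℝ) (hgb : ∀ t, |g t| ≤ C) (a X : ℝ) :
    ∫ x in Ioc a X, ν x * (∫ t in Ioc a x, g t) =
      ∫ t in Ioc a X, g t * (∫ x in Ioc t X, ν x) := by
  have hC : 0 ≤ C := le_trans (abs_nonneg _) (hgb 0)
  set S : Set (ℝ × ℝ) := {p : ℝ × ℝ | a < p.2 ∧ p.2 ≤ p.1 ∧ p.1 ≤ X} with hS
  have hSmeas : MeasurableSet S := by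
    apply MeasurableSet.inter
    · exact measurableSet_lt measurable_const measurable_snd
    · exact MeasurableSet.inter (measurableSet_le measurable_snd measurable_fst)
        (measurableSet_le measurable_fst measurable_const)
  set F : ℝ × ℝ → ℝ := S.indicator (fun p => ν p.1 * g p.2) with hF
  have hFmeas : AEStronglyMeasurable F (volume.prod volume) := by
    refine (AEStronglyMeasurable.indicator ?_ hSmeas)
    exact (hν.aestronglyMeasurable.comp_fst.mul
      ((hg.comp measurable_snd).aestronglyMeasurable))
  have hdom : Integrable (fun p : ℝ × ℝ =>
      (Ioc a X).indicator (fun x => |ν x|) p.1 * (Ioc a X).indicator (fun _ => C) p.2)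
      (volume.prod volume) := by
    apply Integrable.mul_prod
    · exact (hν.norm.indicator measurableSet_Ioc)
    · exact (integrableOn_const measure_Ioc_lt_top.ne).integrable_indicator
        measurableSet_Ioc
  have hFint : Integrable F (volume.prod volume) := by
    refine hdom.mono' hFmeas (Filter.Eventually.of_forall fun p => ?_)
    by_cases hp : p ∈ S
    · rw [hF, indicator_of_mem hp]
      obtain ⟨h1, h2, h3⟩ := hp
      rw [indicator_of_mem (by exact ⟨lt_of_lt_of_le h1 h2, h3⟩ : p.1 ∈ Ioc a X),
        indicator_of_mem (by exact ⟨h1, le_trans h2 h3⟩ : p.2 ∈ Ioc a X)]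
      calc ‖ν p.1 * g p.2‖ = |ν p.1| * |g p.2| := by rw [norm_mul]; rfl
        _ ≤ |ν p.1| * C := by
            exact mul_le_mul_of_nonneg_left (hgb p.2) (abs_nonneg _)
    · rw [hF, indicator_of_notMem hp]
      simp only [norm_zero]
      exact mul_nonneg (indicator_nonneg (fun x _ => abs_nonneg _) _)
        (indicator_nonneg (fun x _ => hC) _)
  have key := integral_integral_swap (f := fun x t => F (x, t)) hFint
  have lhs_eq : (∫ x : ℝ, ∫ t : ℝ, F (x, t)) =
      ∫ x in Ioc a X, ν x * (∫ t in Ioc a x, g t) := by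
    rw [← integral_indicator measurableSet_Ioc]
    congr 1
    ext x
    by_cases hx : x ∈ Ioc a X
    · rw [indicator_of_mem hx]
      have : (fun t => F (x, t)) = (Ioc a x).indicator (fun t => ν x * g t) := by
        ext t
        by_cases ht : t ∈ Ioc a x
        · rw [indicator_of_mem ht, hF, indicator_of_mem]
          exact ⟨ht.1, ht.2, hx.2⟩
        · rw [indicator_of_notMem ht, hF, indicator_of_notMem]
          intro hmem
          exact ht ⟨hmem.1, hmem.2.1⟩
      rw [this, integral_indicator measurableSet_Ioc, integral_const_mul]
    · rw [indicator_of_notMem hx]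
      have : (fun t => F (x, t)) = fun _ => (0 : ℝ) := by
        ext t
        rw [hF, indicator_of_notMem]
        intro hmem
        exact hx ⟨lt_of_lt_of_le hmem.1 hmem.2.1, hmem.2.2⟩
      rw [this, integral_zero]
  have rhs_eq : (∫ t : ℝ, ∫ x : ℝ, F (x, t)) =
      ∫ t in Ioc a X, g t * (∫ x in Ioc t X, ν x) := by
    rw [← integral_indicator measurableSet_Ioc]
    congr 1
    ext t
    by_cases ht : t ∈ Ioc a X
    · rw [indicator_of_mem ht]
      have : (fun x => F (x, t)) = (Icc t X).indicator (fun x => ν x * g t) := by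
        ext x
        by_cases hx : x ∈ Icc t X
        · rw [indicator_of_mem hx, hF, indicator_of_mem]
          exact ⟨ht.1, hx.1, hx.2⟩
        · rw [indicator_of_notMem hx, hF, indicator_of_notMem]
          intro hmem
          exact hx ⟨hmem.2.1, hmem.2.2⟩
      rw [this, integral_indicator measurableSet_Icc, integral_Icc_eq_integral_Ioc]
      rw [integral_mul_const, mul_comm]
    · rw [indicator_of_notMem ht]
      have : (fun x => F (x, t)) = fun _ => (0 : ℝ) := by
        ext x
        rw [hF, indicator_of_notMem]
        intro hmem
        exact ht ⟨hmem.1, le_trans hmem.2.1 hmem.2.2⟩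
      rw [this, integral_zero]
  rw [← lhs_eq, key, rhs_eq]

lemma mul_cos_integrable (ν : ℝ → ℝ) (hν : Integrable ν) (k : ℝ) :
    Integrable (fun x => ν x * Real.cos (k * x)) := by
  refine hν.norm.mono' ?_ (Filter.Eventually.of_forall fun x => ?_)
  · exact hν.aestronglyMeasurable.mul
      ((Real.continuous_cos.comp (continuous_const.mul continuous_id)).aestronglyMeasurable)
  · rw [norm_mul]
    calc ‖ν x‖ * ‖Real.cos (k * x)‖ ≤ ‖ν x‖ * 1 := by
          exact mul_le_mul_of_nonneg_left (by rw [Real.norm_eq_abs]; exact Real.abs_cos_le_one _)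
            (norm_nonneg _)
      _ = ‖ν x‖ := mul_one _

lemma ibp (ν : ℝ → ℝ) (hν : Integrable ν) (k a X : ℝ) :
    ∫ x in Ioc a X, ν x * Real.cos (k * x) =
      Real.cos (k * a) * (∫ x in Ioc a X, ν x)
      - ∫ t in Ioc a X, (k * Real.sin (k * t)) * (∫ x in Ioc t X, ν x) := by
  have hgcont : Continuous fun t : ℝ => k * Real.sin (k * t) :=
    continuous_const.mul (Real.continuous_sin.comp (continuous_const.mul continuous_id))
  have hgbd : ∀ t : ℝ, |k * Real.sin (k * t)| ≤ |k| := by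
    intro t
    rw [abs_mul]
    calc |k| * |Real.sin (k * t)| ≤ |k| * 1 :=
          mul_le_mul_of_nonneg_left (Real.abs_sin_le_one _) (abs_nonneg _)
      _ = |k| := mul_one _
  have hw : ∀ x : ℝ, a ≤ x → (∫ t in Ioc a x, k * Real.sin (k * t))
      = Real.cos (k * a) - Real.cos (k * x) := by
    intro x hx
    rw [← intervalIntegral.integral_of_le hx]
    have hd : ∀ t ∈ uIcc a x, HasDerivAt (fun u => -Real.cos (k * u)) (k * Real.sin (k * t)) t := by
      intro t _
      have h1 : HasDerivAt (fun u : ℝ => k * u) k t := by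
        simpa using (hasDerivAt_id t).const_mul k
      have h2 := ((Real.hasDerivAt_cos (k * t)).comp t h1).neg
      refine h2.congr_deriv ?_
      ring
    rw [intervalIntegral.integral_eq_sub_of_hasDerivAt hd (hgcont.intervalIntegrable a x)]
    ring
  have step1 : ∫ x in Ioc a X, ν x * Real.cos (k * x)
      = ∫ x in Ioc a X, (ν x * Real.cos (k * a)
          - (Real.cos (k * a) - Real.cos (k * x)) * ν x) := by
    refine setIntegral_congr_fun measurableSet_Ioc fun x _ => ?_
    ring
  have hint1 : IntegrableOn (fun x => ν x * Real.cos (k * a)) (Ioc a X) :=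
    (hν.integrableOn).mul_const _
  have hint2 : IntegrableOn (fun x => (Real.cos (k * a) - Real.cos (k * x)) * ν x) (Ioc a X) := by
    refine (hν.integrableOn).bdd_mul (c := 2) ?_ (Filter.Eventually.of_forall fun x => ?_)
    · exact ((continuous_const.sub
        (Real.continuous_cos.comp (continuous_const.mul continuous_id))).aestronglyMeasurable)
    · rw [Real.norm_eq_abs]
      calc |Real.cos (k * a) - Real.cos (k * x)| ≤ |Real.cos (k * a)| + |Real.cos (k * x)| :=
            abs_sub _ _
        _ ≤ 1 + 1 := add_le_add (Real.abs_cos_le_one _) (Real.abs_cos_le_one _)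
        _ = 2 := by norm_num
  rw [step1, integral_sub hint1 hint2, integral_mul_const]
  have step2 : ∫ x in Ioc a X, (Real.cos (k * a) - Real.cos (k * x)) * ν x
      = ∫ x in Ioc a X, ν x * (∫ t in Ioc a x, k * Real.sin (k * t)) := by
    refine setIntegral_congr_fun measurableSet_Ioc fun x hx => ?_
    rw [hw x hx.1.le]
    ring
  rw [mul_comm]
  rw [step2, triangle_swap ν (fun t => k * Real.sin (k * t)) hν hgcont.measurable |k| hgbd a X]

lemma tail_split (ν : ℝ → ℝ) (hν : Integrable ν) {t X : ℝ} (h : t ≤ X) :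
    ∫ x in Ioc t X, ν x = (∫ x in Ioi t, ν x) - ∫ x in Ioi X, ν x := by
  have : ∫ x in Ioi t, ν x = (∫ x in Ioc t X, ν x) + ∫ x in Ioi X, ν x := by
    rw [← setIntegral_union (Ioc_disjoint_Ioi le_rfl) measurableSet_Ioi
      hν.integrableOn hν.integrableOn, Ioc_union_Ioi_eq_Ioi h]
  linarith

lemma exp_integral (η a X : ℝ) (hη : 0 < η) (h : a ≤ X) :
    ∫ t in Ioc a X, Real.exp (-η * t)
      = (Real.exp (-η * a) - Real.exp (-η * X)) / η := by
  rw [← intervalIntegral.integral_of_le h]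
  have hd : ∀ t ∈ uIcc a X, HasDerivAt (fun u => -Real.exp (-η * u) / η)
      (Real.exp (-η * t)) t := by
    intro t _
    have h1 : HasDerivAt (fun u : ℝ => -η * u) (-η) t := by
      simpa using (hasDerivAt_id t).const_mul (-η)
    have h2 := (((Real.hasDerivAt_exp (-η * t)).comp t h1).neg).div_const η
    refine h2.congr_deriv ?_
    field_simp
  rw [intervalIntegral.integral_eq_sub_of_hasDerivAt hd
    (Continuous.intervalIntegrable (by fun_prop) a X)]
  ring

lemma primitive_cont (ν : ℝ → ℝ) (hν : Integrable ν) (X : ℝ) :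
    Continuous fun t : ℝ => ∫ x in t..X, ν x := by
  have : (fun t : ℝ => ∫ x in t..X, ν x) = fun t => -(∫ x in X..t, ν x) := by
    ext t; rw [intervalIntegral.integral_symm]
  rw [this]
  exact (hν.continuous_primitive X).neg

lemma abs_setIntegral_le (f h : ℝ → ℝ) (hf : Continuous f) (hh : Continuous h)
    (a X : ℝ) (hpt : ∀ t ∈ Ioc a X, |f t| ≤ h t) :
    |∫ t in Ioc a X, f t| ≤ ∫ t in Ioc a X, h t := by
  have h0 := norm_integral_le_integral_norm (μ := volume.restrict (Ioc a X)) (f := f)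
  simp only [Real.norm_eq_abs] at h0
  exact le_trans h0 (setIntegral_mono_on hf.abs.integrableOn_Ioc hh.integrableOn_Ioc
    measurableSet_Ioc hpt)

lemma sum_exp_integral (η a X c : ℝ) (hη : 0 < η) (h : a ≤ X) :
    ∫ t in Ioc a X, (Real.exp (-η * t) + c)
      = (Real.exp (-η * a) - Real.exp (-η * X)) / η + (X - a) * c := by
  rw [← intervalIntegral.integral_of_le h]
  have hd : ∀ t ∈ uIcc a X, HasDerivAt (fun u => -Real.exp (-η * u) / η + c * u)
      (Real.exp (-η * t) + c) t := by
    intro t _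
    have h1 : HasDerivAt (fun u : ℝ => -η * u) (-η) t := by
      simpa using (hasDerivAt_id t).const_mul (-η)
    have h2 := ((((Real.hasDerivAt_exp (-η * t)).comp t h1).neg).div_const η).add
      (by simpa using (hasDerivAt_id t).const_mul c)
    refine h2.congr_deriv ?_
    field_simp
  rw [intervalIntegral.integral_eq_sub_of_hasDerivAt hd
    (Continuous.intervalIntegrable (by fun_prop) a X)]
  ring

lemma finite_bound (ν : ℝ → ℝ) (hν : Integrable ν) (η : ℝ) (hη : 0 < η)
    (R₁ : ℝ) (hG : ∀ R, R₁ ≤ R → |∫ x in Ioi R, ν x| ≤ Real.exp (-η * R))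
    (k a : ℝ) (hk0 : 0 ≤ k) (ha : R₁ ≤ a) (X : ℝ) (haX : a ≤ X) (hRX : R₁ ≤ X) :
    |∫ x in a..X, ν x * Real.cos (k * x)|
      ≤ (Real.exp (-η * a) + Real.exp (-η * X))
        + ((k / η) * Real.exp (-η * a) + k * ((X - a) * Real.exp (-η * X))) := by
  rw [intervalIntegral.integral_of_le haX, ibp ν hν k a X]
  have hH : |∫ x in Ioc a X, ν x| ≤ Real.exp (-η * a) + Real.exp (-η * X) := by
    rw [tail_split ν hν haX]
    calc |(∫ x in Ioi a, ν x) - ∫ x in Ioi X, ν x|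
        ≤ |∫ x in Ioi a, ν x| + |∫ x in Ioi X, ν x| := abs_sub _ _
      _ ≤ Real.exp (-η * a) + Real.exp (-η * X) := add_le_add (hG a ha) (hG X hRX)
  have hJb : |∫ t in Ioc a X, (k * Real.sin (k * t)) * (∫ x in Ioc t X, ν x)|
      ≤ (k / η) * Real.exp (-η * a) + k * ((X - a) * Real.exp (-η * X)) := by
    have hJ' : (∫ t in Ioc a X, (k * Real.sin (k * t)) * (∫ x in Ioc t X, ν x))
        = ∫ t in Ioc a X, (k * Real.sin (k * t)) * (∫ x in t..X, ν x) := by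
      refine setIntegral_congr_fun measurableSet_Ioc fun t ht => ?_
      rw [intervalIntegral.integral_of_le ht.2]
    rw [hJ']
    have hcont1 : Continuous fun t : ℝ => (k * Real.sin (k * t)) * (∫ x in t..X, ν x) :=
      (continuous_const.mul (Real.continuous_sin.comp
        (continuous_const.mul continuous_id))).mul (primitive_cont ν hν X)
    have hle := abs_setIntegral_le (fun t => (k * Real.sin (k * t)) * (∫ x in t..X, ν x))
      (fun t => k * (Real.exp (-η * t) + Real.exp (-η * X))) hcont1 (by fun_prop) a X ?_
    · refine le_trans hle ?_
      rw [integral_const_mul, sum_exp_integral η a X (Real.exp (-η * X)) hη haX]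
      have hexpX : 0 ≤ Real.exp (-η * X) := (Real.exp_pos _).le
      have hexpa : 0 ≤ Real.exp (-η * a) := (Real.exp_pos _).le
      have h3 : (Real.exp (-η * a) - Real.exp (-η * X)) / η ≤ Real.exp (-η * a) / η :=
        (div_le_div_iff_of_pos_right hη).2 (by linarith [Real.exp_pos (-η * X)])
      have h4 := mul_le_mul_of_nonneg_left h3 hk0
      have h5 : k * (Real.exp (-η * a) / η) = k / η * Real.exp (-η * a) := by ring
      nlinarith
    · intro t ht
      rw [abs_mul]
      have h1 : |k * Real.sin (k * t)| ≤ k := by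
        rw [abs_mul, abs_of_nonneg hk0]
        calc k * |Real.sin (k * t)| ≤ k * 1 :=
              mul_le_mul_of_nonneg_left (Real.abs_sin_le_one _) hk0
          _ = k := mul_one _
      have h2 : |∫ x in t..X, ν x| ≤ Real.exp (-η * t) + Real.exp (-η * X) := by
        rw [intervalIntegral.integral_of_le ht.2, tail_split ν hν ht.2]
        calc |(∫ x in Ioi t, ν x) - ∫ x in Ioi X, ν x|
            ≤ |∫ x in Ioi t, ν x| + |∫ x in Ioi X, ν x| := abs_sub _ _
          _ ≤ Real.exp (-η * t) + Real.exp (-η * X) :=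
              add_le_add (hG t (le_trans ha ht.1.le)) (hG X hRX)
      exact mul_le_mul h1 h2 (abs_nonneg _) hk0
  calc |Real.cos (k * a) * (∫ x in Ioc a X, ν x)
        - ∫ t in Ioc a X, (k * Real.sin (k * t)) * (∫ x in Ioc t X, ν x)|
      ≤ |Real.cos (k * a) * (∫ x in Ioc a X, ν x)|
        + |∫ t in Ioc a X, (k * Real.sin (k * t)) * (∫ x in Ioc t X, ν x)| := abs_sub _ _
    _ ≤ |∫ x in Ioc a X, ν x|
        + |∫ t in Ioc a X, (k * Real.sin (k * t)) * (∫ x in Ioc t X, ν x)| := by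
        apply add_le_add_left
        rw [abs_mul]
        calc |Real.cos (k * a)| * |∫ x in Ioc a X, ν x|
            ≤ 1 * |∫ x in Ioc a X, ν x| :=
              mul_le_mul_of_nonneg_right (Real.abs_cos_le_one _) (abs_nonneg _)
          _ = |∫ x in Ioc a X, ν x| := one_mul _
    _ ≤ _ := add_le_add hH hJb

lemma tail_bound (ν : ℝ → ℝ) (hν : Integrable ν) (η : ℝ) (hη : 0 < η)
    (R₁ : ℝ) (hG : ∀ R, R₁ ≤ R → |∫ x in Ioi R, ν x| ≤ Real.exp (-η * R))
    (k a : ℝ) (hk0 : 0 ≤ k) (hk1 : k ≤ 1) (ha : R₁ ≤ a) :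
    |∫ x in Ioi a, ν x * Real.cos (k * x)| ≤ (1 + 1 / η) * Real.exp (-η * a) := by
  have hIlim : Tendsto (fun X => |∫ x in a..X, ν x * Real.cos (k * x)|) atTop
      (𝓝 |∫ x in Ioi a, ν x * Real.cos (k * x)|) :=
    (intervalIntegral_tendsto_integral_Ioi a
      ((mul_cos_integrable ν hν k).integrableOn) tendsto_id).abs
  have hexp0 : Tendsto (fun X : ℝ => Real.exp (-η * X)) atTop (𝓝 0) := by
    apply Real.tendsto_exp_atBot.comp
    exact Tendsto.const_mul_atTop_of_neg (neg_lt_zero.2 hη) tendsto_id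
  have hlin0 : Tendsto (fun X : ℝ => (X - a) * Real.exp (-η * X)) atTop (𝓝 0) := by
    have h1 : Tendsto (fun X : ℝ => X * Real.exp (-η * X)) atTop (𝓝 0) := by
      have h2 := (tendsto_pow_mul_exp_neg_atTop_nhds_zero 1).comp
        (Tendsto.const_mul_atTop hη tendsto_id)
      have h3 := h2.const_mul (1 / η)
      rw [mul_zero] at h3
      refine h3.congr fun X => ?_
      simp only [Function.comp_apply, pow_one, id_eq]
      field_simp
    have h4 : Tendsto (fun X : ℝ => X * Real.exp (-η * X) - a * Real.exp (-η * X))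
        atTop (𝓝 0) := by simpa using h1.sub (hexp0.const_mul a)
    refine h4.congr fun X => ?_
    ring
  have hBlim : Tendsto (fun X => (Real.exp (-η * a) + Real.exp (-η * X))
      + ((k / η) * Real.exp (-η * a) + k * ((X - a) * Real.exp (-η * X)))) atTop
      (𝓝 ((Real.exp (-η * a) + 0) + ((k / η) * Real.exp (-η * a) + k * 0))) :=
    (tendsto_const_nhds.add hexp0).add (tendsto_const_nhds.add (hlin0.const_mul k))
  have hev : ∀ᶠ X in atTop, |∫ x in a..X, ν x * Real.cos (k * x)|
      ≤ (Real.exp (-η * a) + Real.exp (-η * X))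
        + ((k / η) * Real.exp (-η * a) + k * ((X - a) * Real.exp (-η * X))) := by
    filter_upwards [eventually_ge_atTop (max a R₁)] with X hX
    exact finite_bound ν hν η hη R₁ hG k a hk0 ha X
      (le_trans (le_max_left _ _) hX) (le_trans (le_max_right _ _) hX)
  have hfin := le_of_tendsto_of_tendsto hIlim hBlim hev
  refine le_trans hfin ?_
  have hexp : 0 ≤ Real.exp (-η * a) := (Real.exp_pos _).le
  have h4 : k / η ≤ 1 / η := (div_le_div_iff_of_pos_right hη).2 hk1
  nlinarith

lemma even_tail (f : ℝ → ℝ) (hf : Integrable f) (heven : ∀ x, f (-x) = f x)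
    (c : ℝ) (hc : 0 ≤ c) :
    ∫ x in (Icc (-c) c)ᶜ, f x = 2 * ∫ x in Ioi c, f x := by
  have hcompl : (Icc (-c) c)ᶜ = Iio (-c) ∪ Ioi c := by
    ext x
    simp only [mem_compl_iff, mem_Icc, not_and_or, not_le, mem_union, mem_Iio, mem_Ioi]
  have hdisj : Disjoint (Iio (-c)) (Ioi c) := by
    rw [Set.disjoint_left]
    intro x hx hx'
    simp only [mem_Iio] at hx
    simp only [mem_Ioi] at hx'
    linarith
  rw [hcompl, setIntegral_union hdisj measurableSet_Ioi hf.integrableOn hf.integrableOn]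
  have h1 : ∫ x in Iio (-c), f x = ∫ x in Ioi c, f x := by
    rw [← integral_Iic_eq_integral_Iio, ← integral_comp_neg_Ioi]
    exact setIntegral_congr_fun measurableSet_Ioi fun x _ => heven x
  rw [h1]
  ring

lemma even_G (ν : ℝ → ℝ) (hν : Integrable ν) (hν_even : ∀ x, ν (-x) = ν x)
    (R : ℝ) (hR : 0 < R) :
    ∫ x in {x : ℝ | R ≤ |x|}, ν x = 2 * ∫ x in Ioi R, ν x := by
  have hset : {x : ℝ | R ≤ |x|} = Iic (-R) ∪ Ici R := by
    ext x
    simp only [mem_setOf_eq, le_abs, mem_union, mem_Iic, mem_Ici]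
    constructor
    · rintro (h | h)
      · exact Or.inr h
      · exact Or.inl (by linarith)
    · rintro (h | h)
      · exact Or.inr (by linarith)
      · exact Or.inl h
  have hdisj : Disjoint (Iic (-R)) (Ici R) := by
    rw [Set.disjoint_left]
    intro x hx hx'
    simp only [mem_Iic] at hx
    simp only [mem_Ici] at hx'
    linarith
  rw [hset, setIntegral_union hdisj measurableSet_Ici hν.integrableOn hν.integrableOn]
  have h1 : ∫ x in Iic (-R), ν x = ∫ x in Ioi R, ν x := by
    rw [← integral_comp_neg_Ioi]
    exact setIntegral_congr_fun measurableSet_Ioi fun x _ => hν_even x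
  rw [h1, integral_Ici_eq_integral_Ioi]
  ring

lemma ratio_mono {a b : ℝ} (ha : 0 ≤ a) (hab : a ≤ b) :
    a ^ 2 / (1 + a ^ 2) ≤ b ^ 2 / (1 + b ^ 2) := by
  rw [div_le_div_iff₀ (by positivity) (by positivity)]
  nlinarith

lemma base_eq {L : ℝ} (hL : 0 < L) :
    (π / (2 * L)) ^ 2 / (1 + (π / (2 * L)) ^ 2) = π ^ 2 / ((2 * L) ^ 2 + π ^ 2) := by
  have h1 : (2 * L) ^ 2 > 0 := by positivity
  have h2 : (2 * L) ^ 2 + π ^ 2 > 0 := by positivity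
  have h3 : 1 + (π / (2 * L)) ^ 2 > 0 := by positivity
  field_simp

/-- Lower bound on the symbol quantities `Λ_j` for large `L`: for an even, unit-mass,
exponentially localized kernel whose Fourier symbol factors as `M(k) k²/(1+k²)` with
`M ≥ c_M > 0`, the quantities
`Λ_j = 1 - ∫_{-2L}^{2L} ν(x) cos(jπx/(2L)) dx` satisfy
`Λ_j ≥ c_M π²/((2L)² + π²) - 2 e^{-ηL} > 0` for all `j ≥ 1`. -/
theorem stmt_10 (ν : ℝ → ℝ) (hν_int : Integrable ν) (hν_even : ∀ x, ν (-x) = ν x)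
    (hmass : ∫ x : ℝ, ν x = 1)
    (η : ℝ) (hη : 0 < η)
    (htail : ∃ R₀ : ℝ, ∀ R ≥ R₀, |∫ x in {x : ℝ | R ≤ |x|}, ν x| ≤ 2 * Real.exp (-η * R))
    (M : ℝ → ℝ) (c_M : ℝ) (hc_M : 0 < c_M) (hM : ∀ k, c_M ≤ M k)
    (hsymbol : ∀ k : ℝ, 1 - ∫ x : ℝ, ν x * Real.cos (k * x)
      = M k * k ^ 2 / (1 + k ^ 2)) :
    ∃ L₀ : ℝ, ∀ L ≥ L₀, ∀ j : ℕ, 1 ≤ j →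
      c_M * π ^ 2 / ((2 * L) ^ 2 + π ^ 2) - 2 * Real.exp (-η * L)
        ≤ 1 - ∫ x in Icc (-(2 * L)) (2 * L), ν x * Real.cos (j * π * x / (2 * L)) ∧
      0 < c_M * π ^ 2 / ((2 * L) ^ 2 + π ^ 2) - 2 * Real.exp (-η * L) := by
  obtain ⟨R₀, hR₀⟩ := htail
  set R₁ : ℝ := max R₀ 1 with hR₁def
  -- one-sided tail bound
  have hG : ∀ R, R₁ ≤ R → |∫ x in Ioi R, ν x| ≤ Real.exp (-η * R) := by
    intro R hR
    have hRpos : 0 < R := lt_of_lt_of_le one_pos (le_trans (le_max_right _ _) hR)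
    have h1 := hR₀ R (le_trans (le_max_left _ _) hR)
    rw [even_G ν hν_int hν_even R hRpos] at h1
    rw [abs_mul, abs_of_nonneg (by norm_num : (0:ℝ) ≤ 2)] at h1
    linarith [abs_nonneg (∫ x in Ioi R, ν x)]
  -- eventual conditions
  have hev1 : ∀ᶠ L : ℝ in atTop, R₁ ≤ L := eventually_ge_atTop R₁
  have hev2 : ∀ᶠ L : ℝ in atTop, π ≤ L := eventually_ge_atTop π
  have hexp0 : Tendsto (fun L : ℝ => Real.exp (-η * L)) atTop (𝓝 0) := by
    apply Real.tendsto_exp_atBot.comp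
    exact Tendsto.const_mul_atTop_of_neg (neg_lt_zero.2 hη) tendsto_id
  have hev3 : ∀ᶠ L : ℝ in atTop, (1 + 1 / η) * Real.exp (-η * L) ≤ 1 := by
    have h1 : Tendsto (fun L : ℝ => (1 + 1 / η) * Real.exp (-η * L)) atTop (𝓝 0) := by
      simpa using hexp0.const_mul (1 + 1 / η)
    exact (h1.eventually (eventually_le_nhds one_pos))
  have hev4 : ∀ᶠ L : ℝ in atTop,
      ∫ x in (Icc (-(2 * L)) (2 * L))ᶜ, |ν x| ≤ c_M / 4 := by
    have h2L : Tendsto (fun L : ℝ => 2 * L) atTop atTop :=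
      Tendsto.const_mul_atTop two_pos tendsto_id
    have hneg : Tendsto (fun L : ℝ => -(2 * L)) atTop atBot :=
      tendsto_neg_atTop_atBot.comp h2L
    have hT : Tendsto (fun L : ℝ => ∫ x in (-(2 * L))..(2 * L), |ν x|) atTop
        (𝓝 (∫ x : ℝ, |ν x|)) :=
      intervalIntegral_tendsto_integral hν_int.abs hneg h2L
    have hlt : (∫ x : ℝ, |ν x|) - c_M / 4 < ∫ x : ℝ, |ν x| := by linarith
    filter_upwards [hT.eventually (eventually_gt_nhds hlt), eventually_ge_atTop (0:ℝ)]
      with L hL hL0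
    have hle : -(2 * L) ≤ 2 * L := by linarith
    have hsplit := integral_add_compl (measurableSet_Icc :
      MeasurableSet (Icc (-(2 * L)) (2 * L))) hν_int.abs
    have hIcc : ∫ x in Icc (-(2 * L)) (2 * L), |ν x|
        = ∫ x in (-(2 * L))..(2 * L), |ν x| := by
      rw [intervalIntegral.integral_of_le hle, integral_Icc_eq_integral_Ioc]
    linarith
  have hev5 : ∀ᶠ L : ℝ in atTop,
      ((2 * L) ^ 2 + π ^ 2) * (2 * Real.exp (-η * L)) < c_M * π ^ 2 := by
    have h1 : Tendsto (fun L : ℝ => ((2 * L) ^ 2 + π ^ 2) * (2 * Real.exp (-η * L)))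
        atTop (𝓝 0) := by
      have hsq : Tendsto (fun L : ℝ => L ^ 2 * Real.exp (-η * L)) atTop (𝓝 0) := by
        have h2 := (tendsto_pow_mul_exp_neg_atTop_nhds_zero 2).comp
          (Tendsto.const_mul_atTop hη tendsto_id)
        have h3 := h2.const_mul (1 / η ^ 2)
        rw [mul_zero] at h3
        refine h3.congr fun L => ?_
        simp only [Function.comp_apply, id_eq]
        rw [neg_mul]
        field_simp
      have h4 : Tendsto (fun L : ℝ => 8 * (L ^ 2 * Real.exp (-η * L))
          + 2 * π ^ 2 * Real.exp (-η * L)) atTop (𝓝 (8 * 0 + 2 * π ^ 2 * 0)) :=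
        (hsq.const_mul 8).add (hexp0.const_mul (2 * π ^ 2))
      simp only [mul_zero, add_zero] at h4
      refine h4.congr fun L => ?_
      ring
    exact h1.eventually (eventually_lt_nhds (by positivity))
  obtain ⟨L₀, hL₀⟩ := eventually_atTop.1 (((hev1.and hev2).and (hev3.and hev4)).and hev5)
  refine ⟨L₀, fun L hL j hj => ?_⟩
  obtain ⟨⟨⟨hLR₁, hLπ⟩, hL3, hL4⟩, hL5⟩ := hL₀ L hL
  have hπpos : 0 < π := Real.pi_pos
  have hLpos : 0 < L := lt_of_lt_of_le hπpos hLπ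
  have hDpos : 0 < (2 * L) ^ 2 + π ^ 2 := by positivity
  -- positivity part
  have hpos : 0 < c_M * π ^ 2 / ((2 * L) ^ 2 + π ^ 2) - 2 * Real.exp (-η * L) := by
    rw [sub_pos, lt_div_iff₀ hDpos]
    linarith [hL5]
  refine ⟨?_, hpos⟩
  -- main estimate
  set k : ℝ := (j : ℝ) * π / (2 * L) with hk
  have hj1 : (1 : ℝ) ≤ (j : ℝ) := by exact_mod_cast hj
  have hk0 : 0 < k := by
    apply div_pos (mul_pos (lt_of_lt_of_le one_pos hj1) hπpos) (by linarith)
  have hkge : π / (2 * L) ≤ k := by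
    rw [hk]
    apply (div_le_div_iff_of_pos_right (by linarith : (0:ℝ) < 2 * L)).2
    exact le_mul_of_one_le_left hπpos.le hj1
  -- rewrite integrand
  have hinteq : (∫ x in Icc (-(2 * L)) (2 * L), ν x * Real.cos ((j : ℝ) * π * x / (2 * L)))
      = ∫ x in Icc (-(2 * L)) (2 * L), ν x * Real.cos (k * x) := by
    refine setIntegral_congr_fun measurableSet_Icc fun x _ => ?_
    congr 1
    rw [hk]
    ring
  rw [hinteq]
  -- splitting
  have hsplit := integral_add_compl (measurableSet_Icc :
    MeasurableSet (Icc (-(2 * L)) (2 * L))) (mul_cos_integrable ν hν_int k)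
  have hsym := hsymbol k
  have hΛ : 1 - (∫ x in Icc (-(2 * L)) (2 * L), ν x * Real.cos (k * x))
      = M k * k ^ 2 / (1 + k ^ 2)
        + ∫ x in (Icc (-(2 * L)) (2 * L))ᶜ, ν x * Real.cos (k * x) := by
    linarith
  rw [hΛ]
  have hMk : c_M * (k ^ 2 / (1 + k ^ 2)) ≤ M k * k ^ 2 / (1 + k ^ 2) := by
    rw [mul_div_assoc]
    exact mul_le_mul_of_nonneg_right (hM k) (by positivity)
  have hbase : c_M * π ^ 2 / ((2 * L) ^ 2 + π ^ 2)
      = c_M * (π ^ 2 / ((2 * L) ^ 2 + π ^ 2)) := by rw [mul_div_assoc]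
  by_cases hk1 : k ≤ 1
  · -- small k case
    have htail2 : |∫ x in (Icc (-(2 * L)) (2 * L))ᶜ, ν x * Real.cos (k * x)|
        ≤ 2 * Real.exp (-η * L) := by
      have heven2 : ∀ x, ν (-x) * Real.cos (k * (-x)) = ν x * Real.cos (k * x) := by
        intro x
        rw [hν_even, mul_neg, Real.cos_neg]
      rw [even_tail _ (mul_cos_integrable ν hν_int k) heven2 (2 * L) (by linarith)]
      have hb := tail_bound ν hν_int η hη R₁ hG k (2 * L) hk0.le hk1
        (by linarith : R₁ ≤ 2 * L)
      have hbb : (1 + 1 / η) * Real.exp (-η * (2 * L)) ≤ Real.exp (-η * L) := by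
        have he : Real.exp (-η * (2 * L)) = Real.exp (-η * L) * Real.exp (-η * L) := by
          rw [← Real.exp_add]
          congr 1
          ring
        rw [he, ← mul_assoc]
        calc (1 + 1 / η) * Real.exp (-η * L) * Real.exp (-η * L)
            ≤ 1 * Real.exp (-η * L) := by
              exact mul_le_mul_of_nonneg_right hL3 (Real.exp_pos _).le
          _ = Real.exp (-η * L) := one_mul _
      rw [abs_mul, abs_of_nonneg (by norm_num : (0:ℝ) ≤ 2)]
      have := le_trans hb hbb
      linarith
    have hmono : c_M * (π ^ 2 / ((2 * L) ^ 2 + π ^ 2)) ≤ c_M * (k ^ 2 / (1 + k ^ 2)) := by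
      apply mul_le_mul_of_nonneg_left _ hc_M.le
      rw [← base_eq hLpos]
      exact ratio_mono (by positivity) hkge
    have habs := abs_le.1 htail2
    rw [hbase]
    linarith
  · -- large k case
    push_neg at hk1
    have htail3 : |∫ x in (Icc (-(2 * L)) (2 * L))ᶜ, ν x * Real.cos (k * x)|
        ≤ c_M / 4 := by
      refine le_trans ?_ hL4
      have h0 := norm_integral_le_integral_norm
        (μ := volume.restrict ((Icc (-(2 * L)) (2 * L))ᶜ))
        (f := fun x => ν x * Real.cos (k * x))
      simp only [Real.norm_eq_abs] at h0
      refine le_trans h0 ?_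
      refine setIntegral_mono_on ((mul_cos_integrable ν hν_int k).integrableOn.abs)
        (hν_int.abs.integrableOn) measurableSet_Icc.compl fun x _ => ?_
      rw [abs_mul]
      calc |ν x| * |Real.cos (k * x)| ≤ |ν x| * 1 :=
            mul_le_mul_of_nonneg_left (Real.abs_cos_le_one _) (abs_nonneg _)
        _ = |ν x| := mul_one _
    have hhalf : (1 : ℝ) / 2 ≤ k ^ 2 / (1 + k ^ 2) := by
      rw [div_le_div_iff₀ (by norm_num) (by positivity)]
      nlinarith
    have hquarter : π ^ 2 / ((2 * L) ^ 2 + π ^ 2) ≤ 1 / 4 := by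
      rw [div_le_div_iff₀ hDpos (by norm_num)]
      nlinarith
    have habs := abs_le.1 htail3
    have hexpL : 0 ≤ Real.exp (-η * L) := (Real.exp_pos _).le
    rw [hbase]
    linarith [mul_le_mul_of_nonneg_left hhalf hc_M.le,
      mul_le_mul_of_nonneg_left hquarter hc_M.le]
end

section
/- Let ν(y) = (1/2) e^{−|y|} and a > 0, and let f(x) = 1/(1+x²) − (1/2)/(1+(x−a)²) − (1/2)/(1+(x+a)²). Then ∫_ℝ f(x) dx = 0 and ∫_ℝ x f(x) dx = 0, and the function u(x) = f(x) − ∫_{−∞}^x ∫_{−∞}^w f(y) dy dw satisfies L∗u(x) = ∫_ℝ (u(x) − u(x−y)) ν(y) dy = f(x) for all x ∈ ℝ. -/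
open MeasureTheory Set Filter Real Topology

noncomputable def auxG (f : ℝ → ℝ) : ℝ → ℝ := fun w => ∫ y in Iic w, f y

lemma aux_hasDerivAt_integral_Iic {h : ℝ → ℝ} (hint : Integrable h) (hcont : Continuous h)
    (t : ℝ) : HasDerivAt (auxG h) (h t) t := by
  have key : ∀ s : ℝ, auxG h s = (∫ y in Iic (0:ℝ), h y) + ∫ y in (0:ℝ)..s, h y := by
    intro s
    rw [auxG, ← intervalIntegral.integral_Iic_sub_Iic hint.integrableOn hint.integrableOn]
    ring
  have H : HasDerivAt (fun s => (∫ y in Iic (0:ℝ), h y) + ∫ y in (0:ℝ)..s, h y) (h t) t :=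
    (intervalIntegral.integral_hasDerivAt_right hint.intervalIntegrable
      (hcont.aestronglyMeasurable.stronglyMeasurableAtFilter) hcont.continuousAt).const_add _
  exact H.congr_of_eventuallyEq (Eventually.of_forall fun s => key s)

lemma aux_G_bot {h : ℝ → ℝ} (hint : Integrable h) :
    Tendsto (auxG h) atBot (𝓝 0) := by
  have h0 := intervalIntegral_tendsto_integral_Iic (0:ℝ) hint.integrableOn tendsto_id
  have h1 : Tendsto (fun w : ℝ => (∫ y in Iic (0:ℝ), h y) - ∫ y in w..(0:ℝ), h y) atBot
      (𝓝 ((∫ y in Iic (0:ℝ), h y) - (∫ y in Iic (0:ℝ), h y))) := tendsto_const_nhds.sub h0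
  rw [sub_self] at h1
  refine h1.congr fun w => ?_
  rw [auxG, ← intervalIntegral.integral_Iic_sub_Iic hint.integrableOn hint.integrableOn]; ring

lemma aux_G_top {h : ℝ → ℝ} (hint : Integrable h) :
    Tendsto (auxG h) atTop (𝓝 (∫ y, h y)) := by
  have h0 := intervalIntegral_tendsto_integral_Ioi (0:ℝ) hint.integrableOn tendsto_id
  have h1 : Tendsto (fun w : ℝ => (∫ y in Iic (0:ℝ), h y) + ∫ y in (0:ℝ)..w, h y) atTop
      (𝓝 ((∫ y in Iic (0:ℝ), h y) + ∫ y in Ioi (0:ℝ), h y)) := tendsto_const_nhds.add h0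
  rw [intervalIntegral.integral_Iic_add_Ioi hint.integrableOn hint.integrableOn] at h1
  refine h1.congr fun w => ?_
  rw [auxG, ← intervalIntegral.integral_Iic_sub_Iic hint.integrableOn hint.integrableOn]; ring

lemma aux_main (f : ℝ → ℝ) (hfc : Continuous f) (hfi : Integrable f)
    (hGi : Integrable (auxG f)) (hmean : (∫ x : ℝ, f x) = 0)
    (Mf : ℝ) (hMf : ∀ z, |f z| ≤ Mf) (x : ℝ) :
    (∫ y : ℝ, ((f x - auxG (auxG f) x) - (f (x - y) - auxG (auxG f) (x - y)))
      * (1 / 2 * Real.exp (-|y|))) = f x := by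
  set G : ℝ → ℝ := auxG f with hGdef
  set F : ℝ → ℝ := auxG G with hFdef
  set u : ℝ → ℝ := fun z => f z - F z with hudef
  show (∫ y : ℝ, (u x - u (x - y)) * (1 / 2 * Real.exp (-|y|))) = f x
  -- derivatives and continuity
  have hGd : ∀ t, HasDerivAt G (f t) t := fun t => aux_hasDerivAt_integral_Iic hfi hfc t
  have hGc : Continuous G := by
    rw [continuous_iff_continuousAt]; exact fun t => (hGd t).continuousAt
  have hFd : ∀ t, HasDerivAt F (G t) t := fun t => aux_hasDerivAt_integral_Iic hGi hGc t
  have hFc : Continuous F := by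
    rw [continuous_iff_continuousAt]; exact fun t => (hFd t).continuousAt
  have huc : Continuous u := hfc.sub hFc
  -- limits
  have hGbot : Tendsto G atBot (𝓝 0) := aux_G_bot hfi
  have hGtop : Tendsto G atTop (𝓝 0) := hmean ▸ aux_G_top hfi
  have hFbot : Tendsto F atBot (𝓝 0) := aux_G_bot hGi
  have hFtop : Tendsto F atTop (𝓝 (∫ y, G y)) := aux_G_top hGi
  -- boundedness of u
  have hFb : ∀ z, |F z| ≤ ∫ w, |G w| := by
    intro z
    calc |F z| ≤ ∫ w in Iic z, |G w| := by
          simpa [Real.norm_eq_abs, hFdef, auxG] using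
            norm_integral_le_integral_norm (μ := volume.restrict (Iic z)) G
      _ ≤ ∫ w, |G w| := setIntegral_le_integral hGi.abs (ae_of_all _ fun w => abs_nonneg _)
  set M : ℝ := Mf + ∫ w, |G w| with hMdef
  have hub : ∀ z, |u z| ≤ M := by
    intro z
    calc |u z| ≤ |f z| + |F z| := abs_sub _ _
      _ ≤ M := add_le_add (hMf z) (hFb z)
  have hM0 : 0 ≤ M := le_trans (abs_nonneg _) (hub 0)
  -- integrand bound
  have hIb : ∀ y z : ℝ, ‖(u x - u z) * (1 / 2 * Real.exp (-|y|))‖ ≤ M * Real.exp (-|y|) := by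
    intro y z
    rw [norm_mul, Real.norm_eq_abs, Real.norm_eq_abs]
    have h1 : |u x - u z| ≤ 2 * M := by
      calc |u x - u z| ≤ |u x| + |u z| := abs_sub _ _
        _ ≤ 2 * M := by linarith [hub x, hub z]
    have h2 : |1 / 2 * Real.exp (-|y|)| = 1 / 2 * Real.exp (-|y|) := by
      rw [abs_of_pos]; positivity
    rw [h2]
    calc |u x - u z| * (1 / 2 * Real.exp (-|y|)) ≤ 2 * M * (1 / 2 * Real.exp (-|y|)) := by
          apply mul_le_mul_of_nonneg_right h1; positivity
      _ = M * Real.exp (-|y|) := by ring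
  have hIc : Continuous fun y : ℝ => (u x - u (x - y)) * (1 / 2 * Real.exp (-|y|)) := by
    apply Continuous.mul
    · exact continuous_const.sub (huc.comp (continuous_const.sub continuous_id))
    · exact continuous_const.mul (Real.continuous_exp.comp (continuous_abs.neg))
  -- integrability on the two half-lines
  have hIiIoi : IntegrableOn (fun y : ℝ => (u x - u (x - y)) * (1 / 2 * Real.exp (-|y|)))
      (Ioi (0:ℝ)) := by
    refine Integrable.mono' (g := fun y => M * Real.exp (-y)) ?_
      hIc.aestronglyMeasurable.restrict ?_
    · exact ((exp_neg_integrableOn_Ioi 0 one_pos).congr_fun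
        (fun y _ => by norm_num) measurableSet_Ioi).const_mul M
    · filter_upwards [ae_restrict_mem measurableSet_Ioi] with y hy
      calc ‖(u x - u (x - y)) * (1 / 2 * Real.exp (-|y|))‖ ≤ M * Real.exp (-|y|) := hIb y _
        _ = M * Real.exp (-y) := by rw [abs_of_pos hy]
  have hIiIio : IntegrableOn (fun y : ℝ => (u x - u (x - y)) * (1 / 2 * Real.exp (-|y|)))
      (Iio (0:ℝ)) := by
    refine Integrable.mono' (g := fun y => M * Real.exp y) ?_
      hIc.aestronglyMeasurable.restrict ?_
    · exact (((integrableOn_exp_Iic 0).mono_set Iio_subset_Iic_self).const_mul M)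
    · filter_upwards [ae_restrict_mem measurableSet_Iio] with y hy
      calc ‖(u x - u (x - y)) * (1 / 2 * Real.exp (-|y|))‖ ≤ M * Real.exp (-|y|) := hIb y _
        _ = M * Real.exp y := by rw [abs_of_neg hy, neg_neg]
  -- limit helpers
  have t1 : Tendsto (fun y : ℝ => x - y) atTop atBot :=
    (tendsto_atBot_add_const_left atTop x tendsto_neg_atTop_atBot).congr
      fun y => (sub_eq_add_neg x y).symm
  have t2 : Tendsto (fun y : ℝ => x + y) atTop atTop :=
    tendsto_atTop_add_const_left atTop x tendsto_id
  have texp : Tendsto (fun y : ℝ => Real.exp (-y)) atTop (𝓝 0) :=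
    Real.tendsto_exp_atBot.comp tendsto_neg_atTop_atBot
  -- positive side
  have key_pos : (∫ y in Ioi (0:ℝ), (u x - u (x - y)) * (1 / 2 * Real.exp (-|y|)))
      = (u x + F x - G x) / 2 := by
    have e1 : (∫ y in Ioi (0:ℝ), (u x - u (x - y)) * (1 / 2 * Real.exp (-|y|)))
        = ∫ y in Ioi (0:ℝ), (u x - u (x - y)) * (1 / 2 * Real.exp (-y)) :=
      setIntegral_congr_fun measurableSet_Ioi fun y hy => by rw [abs_of_pos hy]
    have hderiv : ∀ y ∈ Ici (0:ℝ), HasDerivAt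
        (fun y => -(1/2) * ((u x + F (x - y) - G (x - y)) * Real.exp (-y)))
        ((u x - u (x - y)) * (1 / 2 * Real.exp (-y))) y := by
      intro y _
      have hxy : HasDerivAt (fun y : ℝ => x - y) (-1) y := (hasDerivAt_id y).const_sub x
      have d1 : HasDerivAt (fun y : ℝ => F (x - y)) (G (x - y) * (-1)) y :=
        (hFd (x - y)).comp y hxy
      have d2 : HasDerivAt (fun y : ℝ => G (x - y)) (f (x - y) * (-1)) y :=
        (hGd (x - y)).comp y hxy
      have d3 : HasDerivAt (fun y : ℝ => Real.exp (-y)) (Real.exp (-y) * (-1)) y :=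
        (Real.hasDerivAt_exp (-y)).comp y ((hasDerivAt_id y).neg)
      have dd :=
        ((((hasDerivAt_const y (u x)).add d1).sub d2).mul d3).const_mul (-(1/2) : ℝ)
      have hux : u (x - y) = f (x - y) - F (x - y) := rfl
      convert dd using 1
      case e'_9 => rw [hux]; simp only [Pi.add_apply, Pi.sub_apply]; ring
      all_goals rfl
    have hlim : Tendsto (fun y => -(1/2) * ((u x + F (x - y) - G (x - y)) * Real.exp (-y)))
        atTop (𝓝 0) := by
      have l1 : Tendsto (fun y : ℝ => u x + F (x - y) - G (x - y)) atTop (𝓝 (u x + 0 - 0)) :=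
        (tendsto_const_nhds.add (hFbot.comp t1)).sub (hGbot.comp t1)
      have := ((l1.mul texp).const_mul (-(1/2) : ℝ))
      simpa using this
    have hint' : IntegrableOn (fun y : ℝ => (u x - u (x - y)) * (1 / 2 * Real.exp (-y)))
        (Ioi (0:ℝ)) :=
      hIiIoi.congr_fun (fun y hy => by beta_reduce; rw [abs_of_pos hy]) measurableSet_Ioi
    have hres := integral_Ioi_of_hasDerivAt_of_tendsto' hderiv hint' hlim
    rw [e1, hres]
    simp only [sub_zero, neg_zero, Real.exp_zero]
    ring
  -- negative side
  have key_neg : (∫ y in Iic (0:ℝ), (u x - u (x - y)) * (1 / 2 * Real.exp (-|y|)))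
      = (u x + F x + G x) / 2 := by
    have e0 : (∫ y in Iic (0:ℝ), (u x - u (x - y)) * (1 / 2 * Real.exp (-|y|)))
        = ∫ y in Ioi (0:ℝ), (u x - u (x - (-y))) * (1 / 2 * Real.exp (-|(-y)|)) := by
      rw [show Iic (0:ℝ) = Iic (-(0:ℝ)) by norm_num, ← integral_comp_neg_Ioi]
    have e1 : (∫ y in Ioi (0:ℝ), (u x - u (x - (-y))) * (1 / 2 * Real.exp (-|(-y)|)))
        = ∫ y in Ioi (0:ℝ), (u x - u (x + y)) * (1 / 2 * Real.exp (-y)) := by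
      refine setIntegral_congr_fun measurableSet_Ioi fun y hy => ?_
      rw [sub_neg_eq_add, abs_neg, abs_of_pos hy]
    have hderiv : ∀ y ∈ Ici (0:ℝ), HasDerivAt
        (fun y => -(1/2) * ((u x + F (x + y) + G (x + y)) * Real.exp (-y)))
        ((u x - u (x + y)) * (1 / 2 * Real.exp (-y))) y := by
      intro y _
      have hxy : HasDerivAt (fun y : ℝ => x + y) 1 y := (hasDerivAt_id y).const_add x
      have d1 : HasDerivAt (fun y : ℝ => F (x + y)) (G (x + y) * 1) y :=
        (hFd (x + y)).comp y hxy
      have d2 : HasDerivAt (fun y : ℝ => G (x + y)) (f (x + y) * 1) y :=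
        (hGd (x + y)).comp y hxy
      have d3 : HasDerivAt (fun y : ℝ => Real.exp (-y)) (Real.exp (-y) * (-1)) y :=
        (Real.hasDerivAt_exp (-y)).comp y ((hasDerivAt_id y).neg)
      have dd :=
        ((((hasDerivAt_const y (u x)).add d1).add d2).mul d3).const_mul (-(1/2) : ℝ)
      have hux : u (x + y) = f (x + y) - F (x + y) := rfl
      convert dd using 1
      case e'_9 => rw [hux]; simp only [Pi.add_apply, Pi.sub_apply]; ring
      all_goals rfl
    have hlim : Tendsto (fun y => -(1/2) * ((u x + F (x + y) + G (x + y)) * Real.exp (-y)))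
        atTop (𝓝 0) := by
      have l1 : Tendsto (fun y : ℝ => u x + F (x + y) + G (x + y)) atTop
          (𝓝 (u x + (∫ y, G y) + 0)) :=
        (tendsto_const_nhds.add (hFtop.comp t2)).add (hGtop.comp t2)
      have := ((l1.mul texp).const_mul (-(1/2) : ℝ))
      simpa using this
    have hIc2 : Continuous fun y : ℝ => (u x - u (x + y)) * (1 / 2 * Real.exp (-y)) := by
      apply Continuous.mul
      · exact continuous_const.sub (huc.comp (continuous_const.add continuous_id))
      · exact continuous_const.mul (Real.continuous_exp.comp continuous_neg)
    have hint' : IntegrableOn (fun y : ℝ => (u x - u (x + y)) * (1 / 2 * Real.exp (-y)))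
        (Ioi (0:ℝ)) := by
      refine Integrable.mono' (g := fun y => M * Real.exp (-y)) ?_
        hIc2.aestronglyMeasurable.restrict ?_
      · exact ((exp_neg_integrableOn_Ioi 0 one_pos).congr_fun
          (fun y _ => by norm_num) measurableSet_Ioi).const_mul M
      · filter_upwards [ae_restrict_mem measurableSet_Ioi] with y hy
        have := hIb y (x + y)
        rw [abs_of_pos hy] at this
        exact this
    have hres := integral_Ioi_of_hasDerivAt_of_tendsto' hderiv hint' hlim
    rw [e0, e1, hres]
    simp only [add_zero, neg_zero, Real.exp_zero]
    ring
  -- combine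
  have hIic : IntegrableOn (fun y : ℝ => (u x - u (x - y)) * (1 / 2 * Real.exp (-|y|)))
      (Iic (0:ℝ)) := (integrableOn_Iic_iff_integrableOn_Iio enorm_ne_top).2 hIiIio
  rw [← intervalIntegral.integral_Iic_add_Ioi hIic hIiIoi, key_pos, key_neg]
  have hux : u x = f x - F x := rfl
  rw [hux]; ring

lemma auxQ1 (s t : ℝ) (hs : 1 ≤ s) (ht : 0 < t) :
    0 ≤ 3*(2+t)*s^2 - (6*t^2+7*t+4)*s + 3*t*(1+t)*(t+4) := by
  rcases le_total (6*t^2+t) 8 with h | h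
  · nlinarith [mul_nonneg (sub_nonneg.2 hs) (sub_nonneg.2 hs), sq_nonneg (s-1),
      mul_nonneg (sub_nonneg.2 hs) ht.le,
      mul_nonneg (mul_nonneg (sub_nonneg.2 hs) ht.le) ht.le,
      mul_nonneg (sub_nonneg.2 hs) (sq_nonneg t)]
  · nlinarith [sq_nonneg (6*(2+t)*s - (6*t^2+7*t+4)), ht, mul_pos ht ht,
      mul_pos (mul_pos ht ht) ht]

lemma auxQ2 (s t : ℝ) (hs : 1 ≤ s) (ht : 0 < t) :
    0 ≤ 3*t*s^2 - (6*t^2+5*t-4)*s + 3*t*(1+t)*(t+4) := by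
  rcases le_total (6*t^2) (t+4) with h | h
  · nlinarith [mul_nonneg (sub_nonneg.2 hs) (sub_nonneg.2 hs), sq_nonneg (s-1),
      mul_nonneg (sub_nonneg.2 hs) ht.le,
      mul_nonneg (mul_nonneg (sub_nonneg.2 hs) ht.le) ht.le]
  · nlinarith [sq_nonneg (6*t*s - (6*t^2+5*t-4)), ht, mul_pos ht ht,
      mul_pos (mul_pos ht ht) ht]

/-- The pointwise decay bound `|f y| ≤ 3a²(1+a²)/(1+y²)²`. -/
lemma aux_decay (a : ℝ) (ha : 0 < a) (f : ℝ → ℝ)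
    (hf : ∀ x, f x = 1 / (1 + x ^ 2) - (1 / 2) / (1 + (x - a) ^ 2)
      - (1 / 2) / (1 + (x + a) ^ 2)) (y : ℝ) :
    |f y| ≤ (3*a^2*(1+a^2)) * ((1+y^2)⁻¹ * (1+y^2)⁻¹) := by
  have h1 : (0:ℝ) < 1 + y^2 := by positivity
  have h2 : (0:ℝ) < 1 + (y-a)^2 := by positivity
  have h3 : (0:ℝ) < 1 + (y+a)^2 := by positivity
  have hD : (0:ℝ) < (1+y^2)*((1+(y-a)^2)*(1+(y+a)^2)) := by positivity
  have hfy : f y = (a^2*(1+a^2-3*y^2)) / ((1+y^2)*((1+(y-a)^2)*(1+(y+a)^2))) := by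
    rw [hf]; field_simp; ring
  rw [hfy, abs_div, abs_of_pos hD, div_le_iff₀ hD]
  have hub : a^2*(1+a^2-3*y^2) ≤ 3*a^2*(1+a^2) * ((1+y^2)*((1+(y-a)^2)*(1+(y+a)^2)))
      / ((1+y^2)^2) := by
    rw [le_div_iff₀ (by positivity)]
    have h := mul_nonneg (mul_nonneg (sq_nonneg a) h1.le)
      (auxQ1 (1+y^2) (a^2) (by nlinarith [sq_nonneg y]) (by positivity))
    nlinarith [h]
  have hlb : -(3*a^2*(1+a^2) * ((1+y^2)*((1+(y-a)^2)*(1+(y+a)^2))) / ((1+y^2)^2))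
      ≤ a^2*(1+a^2-3*y^2) := by
    rw [neg_le, le_div_iff₀ (by positivity)]
    have h := mul_nonneg (mul_nonneg (sq_nonneg a) h1.le)
      (auxQ2 (1+y^2) (a^2) (by nlinarith [sq_nonneg y]) (by positivity))
    nlinarith [h]
  have := abs_le.2 ⟨hlb, hub⟩
  calc |a^2*(1+a^2-3*y^2)|
      ≤ 3*a^2*(1+a^2) * ((1+y^2)*((1+(y-a)^2)*(1+(y+a)^2))) / ((1+y^2)^2) := this
    _ = 3*a^2*(1+a^2) * ((1+y^2)⁻¹ * (1+y^2)⁻¹) * ((1+y^2)*((1+(y-a)^2)*(1+(y+a)^2))) := by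
        field_simp


/-- The right-hand side `f(x) = 1/(1+x²) - (1/2)/(1+(x-a)²) - (1/2)/(1+(x+a)²)` has zero
mean and zero first moment, and `u = f - ∬ f` solves `L∗u = f` for the kernel
`ν(y) = (1/2) e^{-|y|}`. -/
theorem stmt_17 (a : ℝ) (ha : 0 < a)
    (f : ℝ → ℝ)
    (hf : ∀ x, f x = 1 / (1 + x ^ 2) - (1 / 2) / (1 + (x - a) ^ 2)
      - (1 / 2) / (1 + (x + a) ^ 2))
    (u : ℝ → ℝ)
    (hu : ∀ x, u x = f x - ∫ w in Iic x, ∫ y in Iic w, f y) :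
    (∫ x : ℝ, f x) = 0 ∧ (∫ x : ℝ, x * f x) = 0 ∧
      ∀ x : ℝ, (∫ y : ℝ, (u x - u (x - y)) * (1 / 2 * Real.exp (-|y|))) = f x := by
  have hd1 : ∀ x : ℝ, (0:ℝ) < 1 + x^2 := fun x => by positivity
  -- continuity of f
  have hfc : Continuous f := by
    have : Continuous (fun x : ℝ => 1 / (1 + x ^ 2) - (1 / 2) / (1 + (x - a) ^ 2)
        - (1 / 2) / (1 + (x + a) ^ 2)) := by
      refine Continuous.sub (Continuous.sub ?_ ?_) ?_ <;>
        exact Continuous.div (by continuity) (by continuity) (fun x => by positivity)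
    exact this.congr fun x => (hf x).symm
  -- integrability of f
  have hg1 : Integrable (fun x : ℝ => (1 + x ^ 2)⁻¹) := integrable_inv_one_add_sq
  have hg2 : Integrable (fun x : ℝ => (1 + (x - a) ^ 2)⁻¹) := hg1.comp_sub_right a
  have hg3 : Integrable (fun x : ℝ => (1 + (x + a) ^ 2)⁻¹) := by
    have := hg1.comp_sub_right (-a)
    simpa [sub_neg_eq_add] using this
  have hfi : Integrable f := by
    have : Integrable (fun x : ℝ => (1 + x ^ 2)⁻¹ - (1/2) * (1 + (x - a) ^ 2)⁻¹
        - (1/2) * (1 + (x + a) ^ 2)⁻¹) := (hg1.sub (hg2.const_mul _)).sub (hg3.const_mul _)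
    refine this.congr (Eventually.of_forall fun x => ?_)
    rw [hf]; ring
  -- Part 1: zero mean
  have hmean : (∫ x : ℝ, f x) = 0 := by
    have e1 : ∫ x : ℝ, f x = (∫ x : ℝ, (1 + x ^ 2)⁻¹)
        - ((1/2) * ∫ x : ℝ, (1 + (x - a) ^ 2)⁻¹) - ((1/2) * ∫ x : ℝ, (1 + (x + a) ^ 2)⁻¹) := by
      have e0 : ∫ x : ℝ, f x = ∫ x : ℝ, ((1 + x ^ 2)⁻¹ - 1/2 * (1 + (x - a) ^ 2)⁻¹
          - 1/2 * (1 + (x + a) ^ 2)⁻¹) :=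
        integral_congr_ae (Eventually.of_forall fun x => by rw [hf]; ring)
      have i2 : Integrable (fun x : ℝ => 1/2 * (1 + (x - a) ^ 2)⁻¹) := hg2.const_mul _
      have i3 : Integrable (fun x : ℝ => 1/2 * (1 + (x + a) ^ 2)⁻¹) := hg3.const_mul _
      have i12 : Integrable (fun x : ℝ => (1 + x ^ 2)⁻¹ - 1/2 * (1 + (x - a) ^ 2)⁻¹) :=
        hg1.sub i2
      rw [e0, integral_sub i12 i3, integral_sub hg1 i2, integral_const_mul, integral_const_mul]
    have e2 : ∫ x : ℝ, (1 + (x - a) ^ 2)⁻¹ = π := by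
      rw [integral_sub_right_eq_self (fun x : ℝ => (1 + x ^ 2)⁻¹) a]
      exact integral_univ_inv_one_add_sq
    have e3 : ∫ x : ℝ, (1 + (x + a) ^ 2)⁻¹ = π := by
      rw [show (fun x : ℝ => (1 + (x + a) ^ 2)⁻¹) = fun x : ℝ => (1 + (x - (-a)) ^ 2)⁻¹ by
        funext x; rw [sub_neg_eq_add]]
      rw [integral_sub_right_eq_self (fun x : ℝ => (1 + x ^ 2)⁻¹) (-a)]
      exact integral_univ_inv_one_add_sq
    rw [e1, e2, e3, integral_univ_inv_one_add_sq]; ring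
  -- Part 2: zero first moment (oddness)
  have hodd : (∫ x : ℝ, x * f x) = 0 := by
    have feven : ∀ x, f (-x) = f x := by
      intro x; rw [hf, hf]; ring_nf
    have h := integral_neg_eq_self (fun y : ℝ => y * f y) volume
    have h2 : (∫ x : ℝ, -x * f (-x)) = ∫ x : ℝ, -(x * f x) := by
      refine integral_congr_ae (Eventually.of_forall fun x => ?_)
      show -x * f (-x) = -(x * f x)
      rw [feven]; ring
    rw [h2, integral_neg] at h
    linarith
  refine ⟨hmean, hodd, ?_⟩
  -- decay bound for f
  set C : ℝ := 3*a^2*(1+a^2) with hCdef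
  have hCpos : 0 < C := by positivity
  have hdec : ∀ y, |f y| ≤ C * ((1+y^2)⁻¹ * (1+y^2)⁻¹) := aux_decay a ha f hf
  -- bound for G = auxG f
  have hGb : ∀ w, |auxG f w| ≤ (C*π) * (1+w^2)⁻¹ := by
    intro w
    have hwpos : (0:ℝ) < 1 + w^2 := hd1 w
    rcases le_total w 0 with hw | hw
    · have step1 : |auxG f w| ≤ ∫ y in Iic w, |f y| := by
        simpa [Real.norm_eq_abs, auxG] using
          norm_integral_le_integral_norm (μ := volume.restrict (Iic w)) f
      have step2 : (∫ y in Iic w, |f y|) ≤ ∫ y in Iic w, (C * (1+w^2)⁻¹) * (1+y^2)⁻¹ := by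
        refine setIntegral_mono_on hfi.abs.integrableOn
          (((hg1.const_mul _)).integrableOn) measurableSet_Iic fun y hy => ?_
        have hy' : y ≤ w := hy
        have h1 : (1:ℝ) + w^2 ≤ 1 + y^2 := by nlinarith [mul_nonneg (sub_nonneg.2 hy') (neg_nonneg.2 hw)]
        have h2 : (1+y^2)⁻¹ ≤ (1+w^2)⁻¹ := by
          apply inv_anti₀ hwpos h1
        calc |f y| ≤ C * ((1+y^2)⁻¹ * (1+y^2)⁻¹) := hdec y
          _ ≤ C * ((1+w^2)⁻¹ * (1+y^2)⁻¹) := by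
              apply mul_le_mul_of_nonneg_left _ hCpos.le
              apply mul_le_mul_of_nonneg_right h2 (by positivity)
          _ = (C * (1+w^2)⁻¹) * (1+y^2)⁻¹ := by ring
      have step3 : (∫ y in Iic w, (C * (1+w^2)⁻¹) * (1+y^2)⁻¹)
          = (C * (1+w^2)⁻¹) * ∫ y in Iic w, (1+y^2)⁻¹ := integral_const_mul _ _
      have step4 : (∫ y in Iic w, (1+y^2)⁻¹ : ℝ) ≤ π := by
        rw [← integral_univ_inv_one_add_sq]
        exact setIntegral_le_integral hg1 (ae_of_all _ fun y => by positivity)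
      calc |auxG f w| ≤ (C * (1+w^2)⁻¹) * ∫ y in Iic w, (1+y^2)⁻¹ := by
            rw [← step3]; exact le_trans step1 step2
        _ ≤ (C * (1+w^2)⁻¹) * π := by
            apply mul_le_mul_of_nonneg_left step4 (by positivity)
        _ = (C*π) * (1+w^2)⁻¹ := by ring
    · have hsplit := intervalIntegral.integral_Iic_add_Ioi (b := w)
        hfi.integrableOn hfi.integrableOn
      have hGw : auxG f w = - ∫ y in Ioi w, f y := by
        have : auxG f w + ∫ y in Ioi w, f y = 0 := by rw [auxG]; rw [hsplit]; exact hmean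
        linarith
      have step1 : |auxG f w| ≤ ∫ y in Ioi w, |f y| := by
        rw [hGw, abs_neg]
        simpa [Real.norm_eq_abs] using
          norm_integral_le_integral_norm (μ := volume.restrict (Ioi w)) f
      have step2 : (∫ y in Ioi w, |f y|) ≤ ∫ y in Ioi w, (C * (1+w^2)⁻¹) * (1+y^2)⁻¹ := by
        refine setIntegral_mono_on hfi.abs.integrableOn
          (((hg1.const_mul _)).integrableOn) measurableSet_Ioi fun y hy => ?_
        have hy' : w ≤ y := le_of_lt hy
        have h1 : (1:ℝ) + w^2 ≤ 1 + y^2 := by nlinarith [mul_nonneg (sub_nonneg.2 hy') hw]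
        have h2 : (1+y^2)⁻¹ ≤ (1+w^2)⁻¹ := by
          apply inv_anti₀ hwpos h1
        calc |f y| ≤ C * ((1+y^2)⁻¹ * (1+y^2)⁻¹) := hdec y
          _ ≤ C * ((1+w^2)⁻¹ * (1+y^2)⁻¹) := by
              apply mul_le_mul_of_nonneg_left _ hCpos.le
              apply mul_le_mul_of_nonneg_right h2 (by positivity)
          _ = (C * (1+w^2)⁻¹) * (1+y^2)⁻¹ := by ring
      have step3 : (∫ y in Ioi w, (C * (1+w^2)⁻¹) * (1+y^2)⁻¹)
          = (C * (1+w^2)⁻¹) * ∫ y in Ioi w, (1+y^2)⁻¹ := integral_const_mul _ _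
      have step4 : (∫ y in Ioi w, (1+y^2)⁻¹ : ℝ) ≤ π := by
        rw [← integral_univ_inv_one_add_sq]
        exact setIntegral_le_integral hg1 (ae_of_all _ fun y => by positivity)
      calc |auxG f w| ≤ (C * (1+w^2)⁻¹) * ∫ y in Ioi w, (1+y^2)⁻¹ := by
            rw [← step3]; exact le_trans step1 step2
        _ ≤ (C * (1+w^2)⁻¹) * π := by
            apply mul_le_mul_of_nonneg_left step4 (by positivity)
        _ = (C*π) * (1+w^2)⁻¹ := by ring
  -- integrability of G
  have hGc : Continuous (auxG f) := by
    rw [continuous_iff_continuousAt]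
    exact fun t => (aux_hasDerivAt_integral_Iic hfi hfc t).continuousAt
  have hGi : Integrable (auxG f) := by
    refine Integrable.mono' (integrable_inv_one_add_sq.const_mul (C*π))
      hGc.aestronglyMeasurable (ae_of_all _ fun w => ?_)
    simpa [Real.norm_eq_abs] using hGb w
  -- bound for f
  have hMf : ∀ z, |f z| ≤ C := by
    intro z
    have h1 : (1:ℝ) ≤ 1 + z^2 := by nlinarith [sq_nonneg z]
    have h2 : (1+z^2)⁻¹ ≤ 1 := by
      rw [inv_le_one_iff₀]; right; exact h1
    calc |f z| ≤ C * ((1+z^2)⁻¹ * (1+z^2)⁻¹) := hdec z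
      _ ≤ C * (1 * 1) := by
          apply mul_le_mul_of_nonneg_left _ hCpos.le
          exact mul_le_mul h2 h2 (by positivity) zero_le_one
      _ = C := by ring
  -- conclude
  intro x
  have hmain := aux_main f hfc hfi hGi hmean C hMf x
  have hu2 : ∀ z, u z = f z - auxG (auxG f) z := by
    intro z; rw [hu z]; rfl
  simp only [hu2]
  exact hmain
end

section
/- Let ν(y) = (1/2) e^{−|y|} with kernel symbol L̂(k) = k²/(1+k²). Define ū(x) = x² − (x²−3)(x−1)(x+1)/12 − 5/6 for x ∈ (−1,1) and ū(x) = x^{−4} − 1/(6x²) for |x| ≥ 1, and f̄(x) = x² − 2/3 for x ∈ (−1,1), f̄(x) = x^{−4} for |x| ≥ 1. Then ∫_ℝ (ū(x) − ū(x−y)) ν(y) dy = f̄(x) for all x ∈ ℝ. -/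
open MeasureTheory Set Filter Real Topology


noncomputable def uF (t : ℝ) : ℝ :=
  if |t| < 1 then t ^ 2 - (t ^ 2 - 3) * (t - 1) * (t + 1) / 12 - 5 / 6
  else 1 / t ^ 4 - 1 / (6 * t ^ 2)

noncomputable def Pin (t : ℝ) : ℝ := -t^4/12 + t^3/3 + t^2/3 - 2*t/3 - 5/12
noncomputable def Qout (t : ℝ) : ℝ := -1/(6*t^2) - 1/(3*t^3)
noncomputable def Ain (t : ℝ) : ℝ := Pin t * Real.exp t
noncomputable def Aout (t : ℝ) : ℝ := Qout t * Real.exp t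
noncomputable def Abar (t : ℝ) : ℝ := if |t| < 1 then Ain t else Aout t

lemma uF_meas : Measurable uF := by
  unfold uF
  exact Measurable.ite (measurableSet_lt (by fun_prop) measurable_const)
    (by fun_prop) (by fun_prop)

lemma uF_bound (t : ℝ) : |uF t| ≤ 2 := by
  unfold uF
  split_ifs with h
  · rw [abs_lt] at h
    have h2 : t^2 ≤ 1 := by nlinarith
    have h4 : t^4 ≤ 1 := by nlinarith
    rw [abs_le]
    constructor <;> nlinarith [sq_nonneg t, sq_nonneg (t^2)]
  · push_neg at h
    have h1 : (1:ℝ) ≤ t^2 := by nlinarith [sq_abs t, abs_nonneg t]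
    have ht0 : t ≠ 0 := by intro h0; rw [h0] at h1; norm_num at h1
    have h4 : (1:ℝ) ≤ t^4 := by nlinarith
    have p2 : (0:ℝ) < t^2 := by nlinarith
    have p4 : (0:ℝ) < t^4 := by nlinarith
    have ha1 : 1/t^4 ≤ 1 := by rw [div_le_one p4]; linarith
    have ha0 : 0 < 1/t^4 := by positivity
    have hb1 : 1/(6*t^2) ≤ 1 := by rw [div_le_one (by linarith)]; linarith
    have hb0 : 0 < 1/(6*t^2) := by positivity
    rw [abs_le]; constructor <;> linarith

lemma hAin (t : ℝ) :
    HasDerivAt Ain ((t ^ 2 - (t ^ 2 - 3) * (t - 1) * (t + 1) / 12 - 5 / 6) * Real.exp t) t := by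
  have h0 : Pin = fun s : ℝ => ((((-(s^4/12)) + s^3/3) + s^2/3) - 2*s/3) - 5/12 := by
    funext s; unfold Pin; ring
  have hp : HasDerivAt Pin (-t^3/3 + t^2 + 2*t/3 - 2/3) t := by
    rw [h0]
    have := (((((hasDerivAt_pow 4 t).div_const 12).neg.add
      ((hasDerivAt_pow 3 t).div_const 3)).add
      ((hasDerivAt_pow 2 t).div_const 3)).sub
      (((hasDerivAt_pow 1 t).const_mul 2).div_const 3)).sub_const (5/12)
    refine (this.congr_deriv (by norm_num; ring)).congr_of_eventuallyEq (Eventually.of_forall fun s => ?_)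
    simp only [Pi.add_apply, Pi.sub_apply, Pi.neg_apply, pow_one]
  have h2 := hp.mul (Real.hasDerivAt_exp t)
  unfold Ain
  refine h2.congr_deriv ?_
  unfold Pin; ring

lemma hAout (t : ℝ) (ht : t ≠ 0) :
    HasDerivAt Aout ((1 / t ^ 4 - 1 / (6 * t ^ 2)) * Real.exp t) t := by
  have h6 : (6 : ℝ) * t^2 ≠ 0 := mul_ne_zero (by norm_num) (pow_ne_zero 2 ht)
  have h3 : (3 : ℝ) * t^3 ≠ 0 := mul_ne_zero (by norm_num) (pow_ne_zero 3 ht)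
  have h2 : HasDerivAt (fun s : ℝ => -1/(6*s^2)) (1/(3*t^3)) t := by
    have := (hasDerivAt_const t (-1:ℝ)).div ((hasDerivAt_pow 2 t).const_mul (6:ℝ)) h6
    refine this.congr_deriv ?_
    field_simp
    ring
  have h3' : HasDerivAt (fun s : ℝ => 1/(3*s^3)) (-(1/t^4)) t := by
    have := (hasDerivAt_const t (1:ℝ)).div ((hasDerivAt_pow 3 t).const_mul (3:ℝ)) h3
    refine this.congr_deriv ?_
    field_simp
    ring
  have hq : HasDerivAt Qout (1/(3*t^3) + 1/t^4) t := by
    have := h2.sub h3'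
    have hQ : Qout = fun s : ℝ => -1/(6*s^2) - 1/(3*s^3) := by funext s; unfold Qout; ring
    rw [hQ]
    refine this.congr_deriv ?_
    ring
  have hm := hq.mul (Real.hasDerivAt_exp t)
  unfold Aout
  refine hm.congr_deriv ?_
  unfold Qout
  field_simp
  ring

lemma intOn_Iic (x : ℝ) : IntegrableOn (fun t => uF t * Real.exp t) (Iic x) := by
  have hg : IntegrableOn (fun t => 2 * Real.exp t) (Iic x) := (integrableOn_exp_Iic x).const_mul 2
  refine hg.mono' (uF_meas.mul measurable_exp).aestronglyMeasurable (ae_of_all _ fun t => ?_)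
  rw [norm_mul, Real.norm_eq_abs, Real.norm_eq_abs, Real.abs_exp]
  exact mul_le_mul_of_nonneg_right (uF_bound t) (Real.exp_nonneg t)

lemma intOn_Ioi (x : ℝ) : IntegrableOn (fun t => uF t * Real.exp (-t)) (Ioi x) := by
  have hg : IntegrableOn (fun t => 2 * Real.exp (-t)) (Ioi x) := by
    have := (exp_neg_integrableOn_Ioi x one_pos).const_mul 2
    simp only [neg_mul, one_mul] at this; exact this
  refine hg.mono' (uF_meas.mul (by fun_prop)).aestronglyMeasurable (ae_of_all _ fun t => ?_)
  rw [norm_mul, Real.norm_eq_abs, Real.norm_eq_abs, Real.abs_exp]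
  exact mul_le_mul_of_nonneg_right (uF_bound t) (Real.exp_nonneg _)

lemma tendAout : Tendsto Aout atBot (𝓝 0) := by
  have hQform : Qout = fun t : ℝ => -(1/6) * (t⁻¹)^2 + -(1/3) * (t⁻¹)^3 := by
    funext t
    rcases eq_or_ne t 0 with rfl | ht
    · simp [Qout]
    · unfold Qout; field_simp; ring
  have h2 : Tendsto (fun t : ℝ => t⁻¹) atBot (𝓝 (0:ℝ)) := by
    have h := ((tendsto_inv_atTop_zero (𝕜 := ℝ)).comp tendsto_neg_atBot_atTop).neg
    simpa [Function.comp, inv_neg] using h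
  have hq : Tendsto Qout atBot (𝓝 0) := by
    rw [hQform]
    have := ((h2.pow 2).const_mul (-(1/6) : ℝ)).add ((h2.pow 3).const_mul (-(1/3) : ℝ))
    simpa using this
  have := hq.mul Real.tendsto_exp_atBot
  show Tendsto (fun t => Qout t * Real.exp t) atBot (𝓝 0)
  simpa using this

lemma AinAout1 : Ain 1 = Aout 1 := by unfold Ain Aout Pin Qout; norm_num
lemma AinAoutm1 : Ain (-1) = Aout (-1) := by unfold Ain Aout Pin Qout; norm_num

lemma uF_out {t : ℝ} (ht : (1:ℝ) ≤ |t|) : uF t = 1 / t ^ 4 - 1 / (6 * t ^ 2) := by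
  unfold uF; rw [if_neg (not_lt.mpr ht)]

lemma keyLeft (x : ℝ) (hx : x ≤ -1) : ∫ t in Iic x, uF t * Real.exp t = Aout x := by
  have h := integral_Iic_of_hasDerivAt_of_tendsto (f := Aout) (a := x)
    (f' := fun t => uF t * Real.exp t) (m := 0)
    ((hAout x (by linarith)).continuousAt.continuousWithinAt)
    (fun t ht => by
      show HasDerivAt Aout (uF t * Real.exp t) t
      rw [uF_out (le_abs.mpr (Or.inr (by simp only [mem_Iio] at ht; linarith)))]
      exact hAout t (by simp only [mem_Iio] at ht; linarith))
    (intOn_Iic x) tendAout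
  simpa using h

lemma ae_ne_one : ∀ᵐ t : ℝ, t ≠ (1:ℝ) := by
  rw [ae_iff]
  simp only [ne_eq, not_not, setOf_eq_eq_singleton]
  exact measure_singleton 1

lemma keyMid (x : ℝ) (h1 : -1 ≤ x) (h2 : x ≤ 1) :
    ∫ t in Iic x, uF t * Real.exp t = Ain x := by
  have hsub := intervalIntegral.integral_Iic_sub_Iic (μ := volume) (intOn_Iic (-1)) (intOn_Iic x)
  have hbase := keyLeft (-1) le_rfl
  have hIcc : ∫ t in (-1:ℝ)..x, uF t * Real.exp t = Ain x - Ain (-1) := by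
    have hcongr : ∫ t in (-1:ℝ)..x, uF t * Real.exp t
        = ∫ t in (-1:ℝ)..x, (t ^ 2 - (t ^ 2 - 3) * (t - 1) * (t + 1) / 12 - 5 / 6) * Real.exp t := by
      apply intervalIntegral.integral_congr_ae
      filter_upwards [ae_ne_one] with t ht htI
      rw [Set.uIoc_of_le h1] at htI
      have habs : |t| < 1 := abs_lt.mpr ⟨by linarith [htI.1], lt_of_le_of_ne (le_trans htI.2 h2) ht⟩
      unfold uF; rw [if_pos habs]
    rw [hcongr]
    exact intervalIntegral.integral_eq_sub_of_hasDerivAt (fun t _ => hAin t)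
      (Continuous.intervalIntegrable (by fun_prop) _ _)
  linarith [AinAoutm1]

lemma keyA (x : ℝ) : ∫ t in Iic x, uF t * Real.exp t = Abar x := by
  rcases le_or_gt x (-1) with hx | hx
  · rw [keyLeft x hx]
    unfold Abar
    rw [if_neg (not_lt.mpr (le_abs.mpr (Or.inr (by linarith))))]
  rcases le_or_gt x 1 with hx1 | hx1
  · rw [keyMid x hx.le hx1]
    unfold Abar
    split_ifs with h
    · rfl
    · have hle : |x| ≤ 1 := abs_le.mpr ⟨by linarith, hx1⟩
      have hxe : |x| = 1 := le_antisymm hle (not_lt.mp h)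
      rcases (abs_eq (by norm_num : (0:ℝ) ≤ 1)).mp hxe with h1 | h1
      · rw [h1]; exact AinAout1
      · linarith
  · have hsub := intervalIntegral.integral_Iic_sub_Iic (μ := volume) (intOn_Iic 1) (intOn_Iic x)
    have hbase := keyMid 1 (by norm_num) le_rfl
    have hI : ∫ t in (1:ℝ)..x, uF t * Real.exp t = Aout x - Aout 1 := by
      apply intervalIntegral.integral_eq_sub_of_hasDerivAt
      · intro t htI
        rw [uIcc_of_le hx1.le] at htI
        rw [uF_out (le_abs.mpr (Or.inl htI.1))]
        exact hAout t (by linarith [htI.1])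
      · rw [intervalIntegrable_iff_integrableOn_Ioc_of_le hx1.le]
        exact (intOn_Iic x).mono_set Ioc_subset_Iic_self
    unfold Abar
    rw [if_neg (not_lt.mpr (le_abs.mpr (Or.inl hx1.le)))]
    linarith [AinAout1]

lemma uF_even (t : ℝ) : uF (-t) = uF t := by
  unfold uF; rw [abs_neg]; split_ifs with h <;> ring_nf

lemma keyB (x : ℝ) : ∫ t in Ioi x, uF t * Real.exp (-t) = Abar (-x) := by
  have h := integral_comp_neg_Ioi x (fun t => uF t * Real.exp t)
  simp only [uF_even] at h
  rw [h, keyA]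

lemma GIntIic (x : ℝ) :
    IntegrableOn (fun t => uF t * (1/2 * Real.exp (-|x - t|))) (Iic x) := by
  refine IntegrableOn.congr_fun ((intOn_Iic x).mul_const (Real.exp (-x) / 2))
    (fun t ht => ?_) measurableSet_Iic
  rw [abs_of_nonneg (sub_nonneg.mpr ht), show -(x - t) = t + -x by ring, Real.exp_add]
  ring

lemma GIntIoi (x : ℝ) :
    IntegrableOn (fun t => uF t * (1/2 * Real.exp (-|x - t|))) (Ioi x) := by
  refine IntegrableOn.congr_fun ((intOn_Ioi x).mul_const (Real.exp x / 2))
    (fun t ht => ?_) measurableSet_Ioi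
  have ht' : x ≤ t := le_of_lt ht
  rw [abs_of_nonpos (by linarith), show -(-(x - t)) = -t + x by ring, Real.exp_add]
  ring

lemma GInt (x : ℝ) : Integrable (fun t : ℝ => uF t * (1/2 * Real.exp (-|x - t|))) := by
  rw [← integrableOn_univ, ← Iic_union_Ioi (a := x)]
  exact (GIntIic x).union (GIntIoi x)

lemma kernel_int (x : ℝ) :
    ∫ t : ℝ, uF t * (1/2 * Real.exp (-|x - t|))
      = Abar x * (Real.exp (-x) / 2) + Abar (-x) * (Real.exp x / 2) := by
  rw [← intervalIntegral.integral_Iic_add_Ioi (GIntIic x) (GIntIoi x)]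
  have e1 : ∫ t in Iic x, uF t * (1/2 * Real.exp (-|x - t|))
      = ∫ t in Iic x, (uF t * Real.exp t) * (Real.exp (-x) / 2) := by
    refine setIntegral_congr_fun measurableSet_Iic fun t ht => ?_
    rw [abs_of_nonneg (sub_nonneg.mpr ht), show -(x - t) = t + -x by ring, Real.exp_add]
    ring
  have e2 : ∫ t in Ioi x, uF t * (1/2 * Real.exp (-|x - t|))
      = ∫ t in Ioi x, (uF t * Real.exp (-t)) * (Real.exp x / 2) := by
    refine setIntegral_congr_fun measurableSet_Ioi fun t ht => ?_
    have ht' : x ≤ t := le_of_lt ht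
    rw [abs_of_nonpos (by linarith), show -(-(x - t)) = -t + x by ring, Real.exp_add]
    ring
  rw [e1, e2, integral_mul_const, integral_mul_const, keyA, keyB]

lemma nuIic : IntegrableOn (fun y : ℝ => Real.exp (-|y|)) (Iic 0) := by
  refine (integrableOn_exp_Iic 0).congr_fun (fun y hy => ?_) measurableSet_Iic
  rw [abs_of_nonpos hy, neg_neg]

lemma nuIoi : IntegrableOn (fun y : ℝ => Real.exp (-|y|)) (Ioi 0) := by
  refine (exp_neg_integrableOn_Ioi 0 one_pos).congr_fun (fun y hy => ?_) measurableSet_Ioi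
  rw [abs_of_nonneg (le_of_lt hy)]
  norm_num

lemma nu_int : Integrable (fun y : ℝ => 1/2 * Real.exp (-|y|)) := by
  have : Integrable (fun y : ℝ => Real.exp (-|y|)) := by
    rw [← integrableOn_univ, ← Iic_union_Ioi (a := (0:ℝ))]
    exact nuIic.union nuIoi
  exact this.const_mul _

lemma nu_total : ∫ y : ℝ, 1/2 * Real.exp (-|y|) = 1 := by
  rw [integral_const_mul]
  have h : ∫ y : ℝ, Real.exp (-|y|) = 2 := by
    rw [← intervalIntegral.integral_Iic_add_Ioi nuIic nuIoi]
    have e1 : ∫ y in Iic (0:ℝ), Real.exp (-|y|) = ∫ y in Iic (0:ℝ), Real.exp y := by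
      refine setIntegral_congr_fun measurableSet_Iic fun y hy => ?_
      rw [abs_of_nonpos hy, neg_neg]
    have e2 : ∫ y in Ioi (0:ℝ), Real.exp (-|y|) = ∫ y in Ioi (0:ℝ), Real.exp (-y) := by
      refine setIntegral_congr_fun measurableSet_Ioi fun y hy => ?_
      rw [abs_of_nonneg (le_of_lt hy)]
    rw [e1, e2, integral_exp_Iic, integral_exp_neg_Ioi]
    norm_num
  rw [h]; norm_num


/-- Exact solution of the nonlocal Neumann model problem: the piecewise functions
`ū` and `f̄` satisfy `∫_ℝ (ū(x) - ū(x-y)) (1/2) e^{-|y|} dy = f̄(x)` for all `x`. -/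
theorem stmt_18 (ubar fbar : ℝ → ℝ)
    (hubar : ∀ x, ubar x =
      if |x| < 1 then x ^ 2 - (x ^ 2 - 3) * (x - 1) * (x + 1) / 12 - 5 / 6
      else 1 / x ^ 4 - 1 / (6 * x ^ 2))
    (hfbar : ∀ x, fbar x =
      if |x| < 1 then x ^ 2 - 2 / 3 else 1 / x ^ 4) :
    ∀ x : ℝ, (∫ y : ℝ, (ubar x - ubar (x - y)) * (1 / 2 * Real.exp (-|y|))) = fbar x := by
  have hu : ubar = uF := funext fun t => by rw [hubar t]; rfl
  intro x
  rw [hu, hfbar]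
  have hswap : ∫ y : ℝ, uF (x - y) * (1 / 2 * Real.exp (-|y|))
      = ∫ t : ℝ, uF t * (1 / 2 * Real.exp (-|x - t|)) := by
    have h := integral_sub_left_eq_self (fun t => uF t * (1 / 2 * Real.exp (-|x - t|))) volume x
    simp only [sub_sub_cancel] at h
    exact h
  have int2 : Integrable (fun y : ℝ => uF (x - y) * (1 / 2 * Real.exp (-|y|))) := by
    have h := (integrable_comp_sub_left (fun t => uF t * (1 / 2 * Real.exp (-|x - t|))) x).mpr (GInt x)
    simp only [sub_sub_cancel] at h
    exact h
  have int1 : Integrable (fun y : ℝ => uF x * (1 / 2 * Real.exp (-|y|))) := nu_int.const_mul _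
  simp only [sub_mul]
  rw [integral_sub int1 int2, integral_const_mul, nu_total, mul_one, hswap, kernel_int x]
  have hEF : Real.exp x * Real.exp (-x) = 1 := by rw [← Real.exp_add]; simp
  unfold uF Abar
  rw [abs_neg]
  split_ifs with h
  · unfold Ain Pin
    linear_combination (x^4/12 - x^2/3 + 5/12) * hEF
  · have hx0 : x ≠ 0 := by intro h0; rw [h0] at h; simp at h
    unfold Aout Qout
    rw [Real.exp_neg, show ((-x)^3 : ℝ) = -(x^3) by ring, show ((-x)^2 : ℝ) = x^2 by ring]
    field_simp
    ring
end
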